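/- arXiv:2108.11125 — 7 statements merged into one kernel-verified Lean document; each statement's English description precedes it below -/
import Mathlib

section
/- Suppose the sequence (x^k, λ^k) is generated by P-ALM, i.e., x^{k+1} ∈ X minimizes x ↦ θ(x) − ⟨λ^k, Ax − b⟩ + (r/2)‖A(x − x^k)‖² + (1/2)⟨x − x^k, Q(x − x^k)⟩ over X and λ^{k+1} = λ^k − r(A(2x^{k+1} − x^k) − b). Then for every k, w^{k+1} = (x^{k+1}, λ^{k+1}) ∈ M and for all w ∈ M: θ(x) − θ(x^{k+1}) + ⟨w − w^{k+1}, J(w)⟩ ≥ ⟨w − w^{k+1}, H(w^k − w^{k+1})⟩. -/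
open Matrix Finset

noncomputable section

/-- The bilinear form `(w₁, w₂) ↦ ⟨w₁, H w₂⟩` of the P-ALM matrix
`H = [[rAᵀA + Q, Aᵀ], [A, (1/r)I]]` on `ℝⁿ × ℝᵐ`. -/
def Hbil {n m : ℕ} (A : Matrix (Fin m) (Fin n) ℝ) (Q : Matrix (Fin n) (Fin n) ℝ) (r : ℝ)
    (w₁ w₂ : (Fin n → ℝ) × (Fin m → ℝ)) : ℝ :=
  w₁.1 ⬝ᵥ ((r • (Aᵀ * A) + Q) *ᵥ w₂.1) + w₁.1 ⬝ᵥ (Aᵀ *ᵥ w₂.2) + w₁.2 ⬝ᵥ (A *ᵥ w₂.1)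
    + 1 / r * (w₁.2 ⬝ᵥ w₂.2)

/-- The squared `H`-weighted norm `‖w‖²_H = ⟨w, Hw⟩`. -/
def HnormSq {n m : ℕ} (A : Matrix (Fin m) (Fin n) ℝ) (Q : Matrix (Fin n) (Fin n) ℝ) (r : ℝ)
    (w : (Fin n → ℝ) × (Fin m → ℝ)) : ℝ := Hbil A Q r w w

/-- The affine map `J(x, λ) = (−Aᵀλ, Ax − b)`. -/
def Jmap {n m : ℕ} (A : Matrix (Fin m) (Fin n) ℝ) (b : Fin m → ℝ)
    (w : (Fin n → ℝ) × (Fin m → ℝ)) : (Fin n → ℝ) × (Fin m → ℝ) :=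
  (-(Aᵀ *ᵥ w.2), A *ᵥ w.1 - b)

/-- The Euclidean inner product on `ℝⁿ × ℝᵐ`. -/
def pdot {n m : ℕ} (w₁ w₂ : (Fin n → ℝ) × (Fin m → ℝ)) : ℝ := w₁.1 ⬝ᵥ w₂.1 + w₁.2 ⬝ᵥ w₂.2

/-- `w* = (x*, λ*)` belongs to the solution set `M*` of `VI(θ, J, M)`, `M = X × ℝᵐ`:
`w*.1 ∈ X` and `θ(x) − θ(x*) + ⟨w − w*, J(w*)⟩ ≥ 0` for all `w ∈ M`. -/
def SolPoint {n m : ℕ} (θ : (Fin n → ℝ) → ℝ) (X : Set (Fin n → ℝ))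
    (A : Matrix (Fin m) (Fin n) ℝ) (b : Fin m → ℝ) (ws : (Fin n → ℝ) × (Fin m → ℝ)) : Prop :=
  ws.1 ∈ X ∧ ∀ w : (Fin n → ℝ) × (Fin m → ℝ), w.1 ∈ X →
    θ w.1 - θ ws.1 + pdot (w - ws) (Jmap A b ws) ≥ 0

/-- The P-ALM iteration: `x^{k+1} ∈ X` minimizes
`x ↦ θ(x) − ⟨λᵏ, Ax − b⟩ + (r/2)‖A(x − xᵏ)‖² + (1/2)⟨x − xᵏ, Q(x − xᵏ)⟩` over `X`, and
`λ^{k+1} = λᵏ − r(A(2x^{k+1} − xᵏ) − b)`. -/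
def PALM {n m : ℕ} (θ : (Fin n → ℝ) → ℝ) (X : Set (Fin n → ℝ))
    (A : Matrix (Fin m) (Fin n) ℝ) (b : Fin m → ℝ) (r : ℝ) (Q : Matrix (Fin n) (Fin n) ℝ)
    (x : ℕ → Fin n → ℝ) (lam : ℕ → Fin m → ℝ) : Prop :=
  (∀ k : ℕ, x (k + 1) ∈ X ∧ ∀ z ∈ X,
      θ (x (k + 1)) - lam k ⬝ᵥ (A *ᵥ x (k + 1) - b)
          + r / 2 * ((A *ᵥ (x (k + 1) - x k)) ⬝ᵥ (A *ᵥ (x (k + 1) - x k)))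
          + 1 / 2 * ((x (k + 1) - x k) ⬝ᵥ (Q *ᵥ (x (k + 1) - x k)))
        ≤ θ z - lam k ⬝ᵥ (A *ᵥ z - b)
          + r / 2 * ((A *ᵥ (z - x k)) ⬝ᵥ (A *ᵥ (z - x k)))
          + 1 / 2 * ((z - x k) ⬝ᵥ (Q *ᵥ (z - x k)))) ∧
  (∀ k : ℕ, lam (k + 1) = lam k - r • (A *ᵥ ((2 : ℝ) • x (k + 1) - x k) - b))

lemma tlin (a C : ℝ) (h : ∀ t : ℝ, 0 < t → t ≤ 1 → 0 ≤ t * a + t ^ 2 * C) : 0 ≤ a := by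
  by_contra hneg
  push_neg at hneg
  rcases le_or_gt C 0 with hC | hC
  · have := h 1 one_pos le_rfl; nlinarith
  · have hq : (0:ℝ) < -a / (2 * C) := div_pos (by linarith) (by linarith)
    have htpos : (0:ℝ) < min 1 (-a / (2 * C)) := lt_min one_pos hq
    have hle : min 1 (-a / (2 * C)) ≤ -a / (2 * C) := min_le_right _ _
    have := h _ htpos (min_le_left _ _)
    set t := min 1 (-a / (2 * C)) with ht
    have h2 : t * (2 * C) ≤ -a := by
      rw [← le_div_iff₀ (by linarith)]; exact hle
    nlinarith

lemma dotT {n m : ℕ} (A : Matrix (Fin m) (Fin n) ℝ) (x : Fin n → ℝ) (y : Fin m → ℝ) :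
    x ⬝ᵥ (Aᵀ *ᵥ y) = (A *ᵥ x) ⬝ᵥ y := by
  rw [Matrix.dotProduct_mulVec, Matrix.vecMul_transpose, dotProduct_comm,
    Matrix.dotProduct_mulVec]

lemma dotQsymm {n : ℕ} (Q : Matrix (Fin n) (Fin n) ℝ) (h : Qᵀ = Q) (x y : Fin n → ℝ) :
    x ⬝ᵥ (Q *ᵥ y) = y ⬝ᵥ (Q *ᵥ x) := by
  conv_lhs => rw [← h]
  rw [dotT, dotProduct_comm]

lemma dotT' {n m : ℕ} (A : Matrix (Fin m) (Fin n) ℝ) (x : Fin n → ℝ) (y : Fin m → ℝ) :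
    (Aᵀ *ᵥ y) ⬝ᵥ x = y ⬝ᵥ (A *ᵥ x) := by
  rw [dotProduct_comm, dotT, dotProduct_comm]

lemma dsq {k : ℕ} (v w : Fin k → ℝ) (t : ℝ) :
    (v + t • w) ⬝ᵥ (v + t • w) = v ⬝ᵥ v + 2 * t * (w ⬝ᵥ v) + t ^ 2 * (w ⬝ᵥ w) := by
  simp [dotProduct_add, add_dotProduct, dotProduct_smul,
    smul_dotProduct, dotProduct_comm v w, smul_eq_mul]
  ring

lemma qexp {k : ℕ} (Q : Matrix (Fin k) (Fin k) ℝ) (h : Qᵀ = Q) (u d : Fin k → ℝ) (t : ℝ) :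
    (u + t • d) ⬝ᵥ (Q *ᵥ (u + t • d)) =
      u ⬝ᵥ (Q *ᵥ u) + 2 * t * (d ⬝ᵥ (Q *ᵥ u)) + t ^ 2 * (d ⬝ᵥ (Q *ᵥ d)) := by
  rw [Matrix.mulVec_add, Matrix.mulVec_smul]
  simp only [dotProduct_add, add_dotProduct, dotProduct_smul,
    smul_dotProduct, smul_eq_mul]
  rw [dotQsymm Q h u d]
  ring

/-- Lemma 2.2, first part. -/
theorem stmt_4 (n m : ℕ) (θ : (Fin n → ℝ) → ℝ) (hθ : ConvexOn ℝ Set.univ θ)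
    (X : Set (Fin n → ℝ)) (hXne : X.Nonempty) (hXclosed : IsClosed X) (hXconvex : Convex ℝ X)
    (A : Matrix (Fin m) (Fin n) ℝ) (b : Fin m → ℝ) (r : ℝ) (hr : 0 < r)
    (Q : Matrix (Fin n) (Fin n) ℝ) (hQ : Q.PosDef)
    (x : ℕ → Fin n → ℝ) (lam : ℕ → Fin m → ℝ) (halg : PALM θ X A b r Q x lam) :
    ∀ k : ℕ, x (k + 1) ∈ X ∧
      ∀ w : (Fin n → ℝ) × (Fin m → ℝ), w.1 ∈ X →
        θ w.1 - θ (x (k + 1)) + pdot (w - (x (k + 1), lam (k + 1))) (Jmap A b w) ≥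
          Hbil A Q r (w - (x (k + 1), lam (k + 1))) ((x k, lam k) - (x (k + 1), lam (k + 1))) := by
  obtain ⟨hmin, hlam⟩ := halg
  intro k
  obtain ⟨hpX, hopt⟩ := hmin k
  refine ⟨hpX, ?_⟩
  have hQT : Qᵀ = Q := by have := hQ.1; simp at this; exact this
  set p := x (k + 1) with hpdef
  set xk := x k with hxkdef
  set lk := lam k with hlkdef
  -- first-order optimality
  have key : ∀ z ∈ X, 0 ≤ θ z - θ p +
      (-(lk ⬝ᵥ (A *ᵥ (z - p))) + r * ((A *ᵥ (z - p)) ⬝ᵥ (A *ᵥ (p - xk)))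
        + (z - p) ⬝ᵥ (Q *ᵥ (p - xk))) := by
    intro z hz
    apply tlin _ (r / 2 * ((A *ᵥ (z - p)) ⬝ᵥ (A *ᵥ (z - p)))
      + 1 / 2 * ((z - p) ⬝ᵥ (Q *ᵥ (z - p))))
    intro t ht0 ht1
    have hpt : (1 - t) • p + t • z = p + t • (z - p) := by module
    have hzt : p + t • (z - p) ∈ X := by
      rw [← hpt]
      exact hXconvex hpX hz (by linarith) ht0.le (by ring)
    have h1 := hopt _ hzt
    have h2 : θ (p + t • (z - p)) ≤ (1 - t) * θ p + t * θ z := by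
      have := hθ.2 (Set.mem_univ p) (Set.mem_univ z)
        (by linarith : (0:ℝ) ≤ 1 - t) ht0.le (by ring)
      rw [hpt] at this
      simpa [smul_eq_mul] using this
    have hvec : p + t • (z - p) - xk = (p - xk) + t • (z - p) := by module
    have hAv : A *ᵥ (p + t • (z - p) - xk) = A *ᵥ (p - xk) + t • (A *ᵥ (z - p)) := by
      rw [hvec, Matrix.mulVec_add, Matrix.mulVec_smul]
    have eq1 : (A *ᵥ (p + t • (z - p) - xk)) ⬝ᵥ (A *ᵥ (p + t • (z - p) - xk))
        = (A *ᵥ (p - xk)) ⬝ᵥ (A *ᵥ (p - xk))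
          + 2 * t * ((A *ᵥ (z - p)) ⬝ᵥ (A *ᵥ (p - xk)))
          + t ^ 2 * ((A *ᵥ (z - p)) ⬝ᵥ (A *ᵥ (z - p))) := by
      rw [hAv, dsq]
    have eq2 : (p + t • (z - p) - xk) ⬝ᵥ (Q *ᵥ (p + t • (z - p) - xk))
        = (p - xk) ⬝ᵥ (Q *ᵥ (p - xk)) + 2 * t * ((z - p) ⬝ᵥ (Q *ᵥ (p - xk)))
          + t ^ 2 * ((z - p) ⬝ᵥ (Q *ᵥ (z - p))) := by
      rw [hvec, qexp Q hQT]
    have eq3 : lk ⬝ᵥ (A *ᵥ (p + t • (z - p)) - b)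
        = lk ⬝ᵥ (A *ᵥ p - b) + t * (lk ⬝ᵥ (A *ᵥ (z - p))) := by
      have : A *ᵥ (p + t • (z - p)) - b = (A *ᵥ p - b) + t • (A *ᵥ (z - p)) := by
        rw [Matrix.mulVec_add, Matrix.mulVec_smul]; abel
      rw [this, dotProduct_add, dotProduct_smul, smul_eq_mul]
    rw [eq1, eq2, eq3] at h1
    nlinarith [h1, h2]
  intro w hw
  have hk := key w.1 hw
  have hl : lam (k + 1) = lk - r • (A *ᵥ ((2 : ℝ) • p - xk) - b) := hlam k
  -- the main algebraic identity
  have hEq : (θ w.1 - θ p + pdot (w - (p, lam (k + 1))) (Jmap A b w))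
      - Hbil A Q r (w - (p, lam (k + 1))) ((xk, lk) - (p, lam (k + 1)))
      = θ w.1 - θ p +
        (-(lk ⬝ᵥ (A *ᵥ (w.1 - p))) + r * ((A *ᵥ (w.1 - p)) ⬝ᵥ (A *ᵥ (p - xk)))
          + (w.1 - p) ⬝ᵥ (Q *ᵥ (p - xk))) := by
    simp only [pdot, Jmap, Hbil, Prod.fst_sub, Prod.snd_sub, hl,
      Matrix.add_mulVec, Matrix.sub_mulVec, Matrix.smul_mulVec,
      ← Matrix.mulVec_mulVec, dotT, dotT',
      Matrix.mulVec_sub, Matrix.mulVec_add, Matrix.mulVec_smul,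
      dotProduct_add, add_dotProduct, dotProduct_sub,
      sub_dotProduct, dotProduct_smul, smul_dotProduct,
      dotProduct_neg, neg_dotProduct, smul_eq_mul, smul_sub, smul_add, dotProduct_comm]
    field_simp
    ring
  linarith [hk, hEq]
end
end

section
/- Suppose the sequence (x^k, λ^k) is generated by P-ALM, i.e., x^{k+1} ∈ X minimizes x ↦ θ(x) − ⟨λ^k, Ax − b⟩ + (r/2)‖A(x − x^k)‖² + (1/2)⟨x − x^k, Q(x − x^k)⟩ over X and λ^{k+1} = λ^k − r(A(2x^{k+1} − x^k) − b). Then for every k and every w ∈ M: θ(x) − θ(x^{k+1}) + ⟨w − w^{k+1}, J(w)⟩ ≥ (1/2)(‖w − w^{k+1}‖²_H − ‖w − w^k‖²_H) + (1/2)‖w^k − w^{k+1}‖²_H, where w^k = (x^k, λ^k). -/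
open Matrix Finset

noncomputable section

lemma dtrans {n m : ℕ} (M : Matrix (Fin m) (Fin n) ℝ) (v : Fin n → ℝ) (w : Fin m → ℝ) :
    v ⬝ᵥ (Mᵀ *ᵥ w) = (M *ᵥ v) ⬝ᵥ w := by
  rw [Matrix.dotProduct_mulVec, Matrix.vecMul_transpose]

lemma dtrans2 {n m : ℕ} (M : Matrix (Fin m) (Fin n) ℝ) (v : Fin n → ℝ) (w : Fin m → ℝ) :
    (Mᵀ *ᵥ w) ⬝ᵥ v = w ⬝ᵥ (M *ᵥ v) := by
  rw [dotProduct_comm, dtrans, dotProduct_comm]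

lemma qsymm {n : ℕ} {Q : Matrix (Fin n) (Fin n) ℝ} (hQt : Qᵀ = Q) (u d : Fin n → ℝ) :
    u ⬝ᵥ (Q *ᵥ d) = d ⬝ᵥ (Q *ᵥ u) := by
  conv_lhs => rw [← hQt]
  rw [dtrans, dotProduct_comm]

/-- limit argument: if 0 ≤ L + t*C for all t ∈ (0,1] and 0 ≤ C then 0 ≤ L. -/
lemma limit_arg (L C : ℝ) (hC : 0 ≤ C) (h : ∀ t : ℝ, 0 < t → t ≤ 1 → 0 ≤ L + t * C) :
    0 ≤ L := by
  by_contra hL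
  push_neg at hL
  set t : ℝ := min 1 ((-L) / (2 * (C + 1))) with ht
  have hnL : 0 < -L := by linarith
  have hpos : 0 < (-L) / (2 * (C + 1)) := div_pos hnL (by positivity)
  have ht0 : 0 < t := lt_min one_pos hpos
  have ht1 : t ≤ 1 := min_le_left _ _
  have ht2 : t ≤ (-L) / (2 * (C + 1)) := min_le_right _ _
  have h3 := h t ht0 ht1
  have h4 : t * C ≤ ((-L) / (2 * (C + 1))) * C := by
    exact mul_le_mul_of_nonneg_right ht2 hC
  have h5 : ((-L) / (2 * (C + 1))) * C ≤ (-L) / 2 := by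
    rw [div_mul_eq_mul_div, div_le_div_iff₀ (by positivity) (by norm_num)]
    nlinarith
  linarith

/-- First-order optimality condition extracted from the P-ALM minimization step. -/
lemma opt_cond {n m : ℕ} (θ : (Fin n → ℝ) → ℝ) (hθ : ConvexOn ℝ Set.univ θ)
    (X : Set (Fin n → ℝ)) (hXconvex : Convex ℝ X)
    (A : Matrix (Fin m) (Fin n) ℝ) (b : Fin m → ℝ) (r : ℝ) (hr : 0 < r)
    (Q : Matrix (Fin n) (Fin n) ℝ) (hQ : Q.PosDef)
    (xk x1 : Fin n → ℝ) (lamk : Fin m → ℝ) (hx1 : x1 ∈ X)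
    (hmin : ∀ z ∈ X,
      θ x1 - lamk ⬝ᵥ (A *ᵥ x1 - b)
          + r / 2 * ((A *ᵥ (x1 - xk)) ⬝ᵥ (A *ᵥ (x1 - xk)))
          + 1 / 2 * ((x1 - xk) ⬝ᵥ (Q *ᵥ (x1 - xk)))
        ≤ θ z - lamk ⬝ᵥ (A *ᵥ z - b)
          + r / 2 * ((A *ᵥ (z - xk)) ⬝ᵥ (A *ᵥ (z - xk)))
          + 1 / 2 * ((z - xk) ⬝ᵥ (Q *ᵥ (z - xk))))
    (z : Fin n → ℝ) (hz : z ∈ X) :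
    0 ≤ θ z - θ x1 + (z - x1) ⬝ᵥ ((r • (Aᵀ * A) + Q) *ᵥ (x1 - xk) - Aᵀ *ᵥ lamk) := by
  set u : Fin n → ℝ := x1 - xk with hu
  set d : Fin n → ℝ := z - x1 with hd
  set L : ℝ := θ z - θ x1 - lamk ⬝ᵥ (A *ᵥ d) + r * ((A *ᵥ u) ⬝ᵥ (A *ᵥ d))
      + d ⬝ᵥ (Q *ᵥ u) with hL
  set C : ℝ := r / 2 * ((A *ᵥ d) ⬝ᵥ (A *ᵥ d)) + 1 / 2 * (d ⬝ᵥ (Q *ᵥ d)) with hC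
  have hCnn : 0 ≤ C := by
    have h1 : 0 ≤ (A *ᵥ d) ⬝ᵥ (A *ᵥ d) := by
      simp only [dotProduct]
      exact Finset.sum_nonneg fun i _ => mul_self_nonneg _
    have h2 : 0 ≤ d ⬝ᵥ (Q *ᵥ d) := by simpa using hQ.posSemidef.dotProduct_mulVec_nonneg d
    positivity
  have hLnn : 0 ≤ L := by
    apply limit_arg L C hCnn
    intro t ht0 ht1
    set zt : Fin n → ℝ := x1 + t • d with hzt
    have hztX : zt ∈ X := by
      have := hXconvex hx1 hz (by linarith : (0:ℝ) ≤ 1 - t) (le_of_lt ht0) (by ring)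
      convert this using 1
      rw [hzt, hd]
      module
    have hθt : θ zt ≤ (1 - t) * θ x1 + t * θ z := by
      have := hθ.2 (Set.mem_univ x1) (Set.mem_univ z)
        (by linarith : (0:ℝ) ≤ 1 - t) (le_of_lt ht0) (by ring)
      convert this using 2
      · rfl
      · rw [hzt, hd]
        module
      · exact (smul_eq_mul _ _).symm
      · exact (smul_eq_mul _ _).symm
    have hmin' := hmin zt hztX
    have hz2 : zt - xk = u + t • d := by rw [hzt, hu, hd]; module
    have e1 : (A *ᵥ (zt - xk)) ⬝ᵥ (A *ᵥ (zt - xk))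
        = (A *ᵥ u) ⬝ᵥ (A *ᵥ u) + 2 * t * ((A *ᵥ u) ⬝ᵥ (A *ᵥ d))
          + t ^ 2 * ((A *ᵥ d) ⬝ᵥ (A *ᵥ d)) := by
      rw [hz2]
      simp only [Matrix.mulVec_add, Matrix.mulVec_smul, dotProduct_add,
        add_dotProduct, dotProduct_smul, smul_dotProduct,
        smul_eq_mul]
      rw [dotProduct_comm (A *ᵥ d) (A *ᵥ u)]
      ring
    have e2 : (zt - xk) ⬝ᵥ (Q *ᵥ (zt - xk))
        = u ⬝ᵥ (Q *ᵥ u) + 2 * t * (d ⬝ᵥ (Q *ᵥ u)) + t ^ 2 * (d ⬝ᵥ (Q *ᵥ d)) := by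
      rw [hz2]
      simp only [Matrix.mulVec_add, Matrix.mulVec_smul, dotProduct_add,
        add_dotProduct, dotProduct_smul, smul_dotProduct,
        smul_eq_mul]
      have hQt : Qᵀ = Q := hQ.1.eq
      rw [qsymm hQt u d]
      ring
    have e3 : lamk ⬝ᵥ (A *ᵥ zt - b)
        = lamk ⬝ᵥ (A *ᵥ x1 - b) + t * (lamk ⬝ᵥ (A *ᵥ d)) := by
      rw [hzt]
      simp only [Matrix.mulVec_add, Matrix.mulVec_smul, dotProduct_sub,
        dotProduct_add, dotProduct_smul, smul_eq_mul]
      ring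
    rw [e1, e2, e3] at hmin'
    have h6 : 0 ≤ t * (L + t * C) := by
      rw [hL, hC]
      nlinarith [hmin', hθt]
    nlinarith [h6, ht0]
  -- convert L ≥ 0 into the stated form
  have efinal : θ z - θ x1 + (z - x1) ⬝ᵥ ((r • (Aᵀ * A) + Q) *ᵥ (x1 - xk) - Aᵀ *ᵥ lamk)
      = L := by
    rw [hL, hu, hd]
    simp only [dotProduct_sub, Matrix.add_mulVec, Matrix.smul_mulVec,
      dotProduct_add, dotProduct_smul, smul_eq_mul, dtrans]
    rw [← Matrix.mulVec_mulVec, dtrans A (z - x1) (A *ᵥ (x1 - xk)),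
      dotProduct_comm (A *ᵥ (z - x1)) (A *ᵥ (x1 - xk)),
      dotProduct_comm (A *ᵥ (z - x1)) lamk]
    ring_nf
  linarith [hLnn, efinal.ge, efinal.le]

/-- Lemma 2.2, inequality (9). -/
theorem stmt_5 (n m : ℕ) (θ : (Fin n → ℝ) → ℝ) (hθ : ConvexOn ℝ Set.univ θ)
    (X : Set (Fin n → ℝ)) (hXne : X.Nonempty) (hXclosed : IsClosed X) (hXconvex : Convex ℝ X)
    (A : Matrix (Fin m) (Fin n) ℝ) (b : Fin m → ℝ) (r : ℝ) (hr : 0 < r)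
    (Q : Matrix (Fin n) (Fin n) ℝ) (hQ : Q.PosDef)
    (x : ℕ → Fin n → ℝ) (lam : ℕ → Fin m → ℝ) (halg : PALM θ X A b r Q x lam) :
    ∀ k : ℕ, ∀ w : (Fin n → ℝ) × (Fin m → ℝ), w.1 ∈ X →
      θ w.1 - θ (x (k + 1)) + pdot (w - (x (k + 1), lam (k + 1))) (Jmap A b w) ≥
        1 / 2 * (HnormSq A Q r (w - (x (k + 1), lam (k + 1)))
              - HnormSq A Q r (w - (x k, lam k)))
          + 1 / 2 * HnormSq A Q r ((x k, lam k) - (x (k + 1), lam (k + 1))) := by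
  intro k w hw
  obtain ⟨hstep, hlam⟩ := halg
  obtain ⟨hx1X, hmin⟩ := hstep k
  have hopt := opt_cond θ hθ X hXconvex A b r hr Q hQ (x k) (x (k+1)) (lam k) hx1X hmin w.1 hw
  have hQt : Qᵀ = Q := hQ.1.eq
  set w1 : (Fin n → ℝ) × (Fin m → ℝ) := (x (k+1), lam (k+1)) with hw1
  set wk : (Fin n → ℝ) × (Fin m → ℝ) := (x k, lam k) with hwk
  have hac : w - wk = (w - w1) - (wk - w1) := by abel
  have hexp : Hbil A Q r ((w - w1) - (wk - w1)) ((w - w1) - (wk - w1))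
      = Hbil A Q r (w - w1) (w - w1) - Hbil A Q r (w - w1) (wk - w1)
        - Hbil A Q r (wk - w1) (w - w1) + Hbil A Q r (wk - w1) (wk - w1) := by
    simp only [Hbil, Prod.fst_sub, Prod.snd_sub, Matrix.mulVec_sub, Matrix.sub_mulVec,
      dotProduct_sub, sub_dotProduct]
    ring
  have hsym : Hbil A Q r (w - w1) (wk - w1) = Hbil A Q r (wk - w1) (w - w1) := by
    simp only [Hbil]
    rw [qsymm (by rw [Matrix.transpose_add, Matrix.transpose_smul, Matrix.transpose_mul,
          Matrix.transpose_transpose, hQt] : (r • (Aᵀ * A) + Q)ᵀ = r • (Aᵀ * A) + Q),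
      dtrans, dtrans, dotProduct_comm ((w - w1).2) ((wk - w1).2),
      dotProduct_comm (A *ᵥ (w - w1).1) ((wk - w1).2),
      dotProduct_comm (A *ᵥ (wk - w1).1) ((w - w1).2)]
    ring
  have heq : pdot (w - w1) (Jmap A b w) - Hbil A Q r (w - w1) (wk - w1)
      = θ w.1 - θ w.1 + (w.1 - x (k+1)) ⬝ᵥ ((r • (Aᵀ * A) + Q) *ᵥ (x (k+1) - x k)
          - Aᵀ *ᵥ lam k) := by
    simp only [pdot, Jmap, Hbil, hw1, hwk, Prod.fst_sub, Prod.snd_sub, hlam k]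
    simp only [Matrix.add_mulVec, Matrix.smul_mulVec, ← Matrix.mulVec_mulVec,
      Matrix.mulVec_sub, Matrix.sub_mulVec, Matrix.mulVec_smul, Matrix.mulVec_add,
      dotProduct_sub, sub_dotProduct, dotProduct_add,
      add_dotProduct, dotProduct_smul, smul_dotProduct,
      dotProduct_neg, neg_dotProduct, dtrans, smul_eq_mul,
      dotProduct_comm]
    simp only [← Matrix.mulVec_mulVec, dtrans, dtrans2, dotProduct_comm]
    field_simp
    ring
  simp only [HnormSq, hac]
  rw [hexp]
  simp only [pdot, Jmap] at heq hopt ⊢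
  linarith [hopt, heq, hsym]
end
end

section
/- Suppose the sequence (x^k, λ^k) is generated by P-ALM, i.e., x^{k+1} ∈ X minimizes x ↦ θ(x) − ⟨λ^k, Ax − b⟩ + (r/2)‖A(x − x^k)‖² + (1/2)⟨x − x^k, Q(x − x^k)⟩ over X and λ^{k+1} = λ^k − r(A(2x^{k+1} − x^k) − b). Then for every w* = (x*, λ*) in the solution set M* and every k: ‖w* − w^{k+1}‖²_H ≤ ‖w* − w^k‖²_H − ‖w^k − w^{k+1}‖²_H, where w^k = (x^k, λ^k). -/
open Matrix Finset

noncomputable section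

private lemma dot_swap {a b : ℕ} (M : Matrix (Fin a) (Fin b) ℝ) (v : Fin a → ℝ) (w : Fin b → ℝ) :
    v ⬝ᵥ (M *ᵥ w) = w ⬝ᵥ (Mᵀ *ᵥ v) := by
  rw [Matrix.dotProduct_mulVec, Matrix.mulVec_transpose]
  exact dotProduct_comm _ _

private lemma nonneg_of_small (a c : ℝ) (h : ∀ t : ℝ, 0 < t → t ≤ 1 → 0 ≤ a + c * t) :
    0 ≤ a := by
  by_contra hne
  push_neg at hne
  have hc : (0:ℝ) < 2 * (|c| + 1) := by positivity
  set t : ℝ := min 1 (-a / (2 * (|c| + 1))) with ht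
  have htp : 0 < -a / (2 * (|c| + 1)) := div_pos (by linarith) hc
  have ht0 : 0 < t := lt_min one_pos htp
  have h1 : c * t ≤ (|c| + 1) * t :=
    mul_le_mul_of_nonneg_right (by linarith [le_abs_self c]) ht0.le
  have h2 : (|c| + 1) * t ≤ (|c| + 1) * (-a / (2 * (|c| + 1))) :=
    mul_le_mul_of_nonneg_left (min_le_right _ _) (by positivity)
  have hcc : |c| + 1 ≠ 0 := by positivity
  have h3 : (|c| + 1) * (-a / (2 * (|c| + 1))) = -a / 2 := by
    field_simp
  have h4 := h t ht0 (min_le_left _ _)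
  linarith

private lemma div_t (a c t : ℝ) (ht : 0 < t) (h : 0 ≤ t * a + t ^ 2 * c) : 0 ≤ a + c * t := by
  nlinarith

private lemma Hbil_sub_left {n m : ℕ} (A : Matrix (Fin m) (Fin n) ℝ)
    (Q : Matrix (Fin n) (Fin n) ℝ) (r : ℝ) (w₁ w₂ w₃ : (Fin n → ℝ) × (Fin m → ℝ)) :
    Hbil A Q r (w₁ - w₂) w₃ = Hbil A Q r w₁ w₃ - Hbil A Q r w₂ w₃ := by
  simp only [Hbil, Prod.fst_sub, Prod.snd_sub, sub_dotProduct]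
  ring

private lemma Hbil_sub_right {n m : ℕ} (A : Matrix (Fin m) (Fin n) ℝ)
    (Q : Matrix (Fin n) (Fin n) ℝ) (r : ℝ) (w₁ w₂ w₃ : (Fin n → ℝ) × (Fin m → ℝ)) :
    Hbil A Q r w₁ (w₂ - w₃) = Hbil A Q r w₁ w₂ - Hbil A Q r w₁ w₃ := by
  simp only [Hbil, Prod.fst_sub, Prod.snd_sub, Matrix.mulVec_sub, dotProduct_sub]
  ring

private lemma Hbil_comm {n m : ℕ} (A : Matrix (Fin m) (Fin n) ℝ)
    (Q : Matrix (Fin n) (Fin n) ℝ) (r : ℝ) (hQs : Qᵀ = Q)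
    (w₁ w₂ : (Fin n → ℝ) × (Fin m → ℝ)) :
    Hbil A Q r w₁ w₂ = Hbil A Q r w₂ w₁ := by
  have hM : (r • (Aᵀ * A) + Q)ᵀ = r • (Aᵀ * A) + Q := by
    rw [Matrix.transpose_add, Matrix.transpose_smul, Matrix.transpose_mul,
      Matrix.transpose_transpose, hQs]
  simp only [Hbil]
  rw [dot_swap (r • (Aᵀ * A) + Q) w₁.1 w₂.1, hM, dot_swap Aᵀ w₁.1 w₂.2,
    Matrix.transpose_transpose, dot_swap A w₁.2 w₂.1, dotProduct_comm w₁.2 w₂.2]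
  ring

/-- Theorem 2.3, contraction inequality (10). -/
theorem stmt_6 (n m : ℕ) (θ : (Fin n → ℝ) → ℝ) (hθ : ConvexOn ℝ Set.univ θ)
    (X : Set (Fin n → ℝ)) (hXne : X.Nonempty) (hXclosed : IsClosed X) (hXconvex : Convex ℝ X)
    (A : Matrix (Fin m) (Fin n) ℝ) (b : Fin m → ℝ) (r : ℝ) (hr : 0 < r)
    (Q : Matrix (Fin n) (Fin n) ℝ) (hQ : Q.PosDef)
    (x : ℕ → Fin n → ℝ) (lam : ℕ → Fin m → ℝ) (halg : PALM θ X A b r Q x lam) :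
    ∀ ws : (Fin n → ℝ) × (Fin m → ℝ), SolPoint θ X A b ws →
      ∀ k : ℕ,
        HnormSq A Q r (ws - (x (k + 1), lam (k + 1))) ≤
          HnormSq A Q r (ws - (x k, lam k))
            - HnormSq A Q r ((x k, lam k) - (x (k + 1), lam (k + 1))) := by

  obtain ⟨hmin, hlam⟩ := halg
  have hQs : Qᵀ = Q := by
    ext i j
    have h := congrFun (congrFun hQ.isHermitian i) j
    simpa [Matrix.conjTranspose_apply] using h
  intro ws hws k
  obtain ⟨xs, ls⟩ := ws
  have hxsX : xs ∈ X := hws.1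
  have hsol := hws.2
  have hx1X := (hmin k).1
  have hopt := (hmin k).2
  have hl := hlam k
  set x1 := x (k + 1) with hx1d
  set xk := x k with hxkd
  set l1 := lam (k + 1) with hl1d
  set lk := lam k with hlkd
  -- orientation (canonicalization) facts
  have hswA : ∀ (v : Fin m → ℝ) (w : Fin n → ℝ), w ⬝ᵥ (Aᵀ *ᵥ v) = v ⬝ᵥ (A *ᵥ w) :=
    fun v w => (dot_swap A v w).symm
  have cQ1 : x1 ⬝ᵥ (Q *ᵥ xs) = xs ⬝ᵥ (Q *ᵥ x1) := by rw [dot_swap Q x1 xs, hQs]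
  have cQ2 : xk ⬝ᵥ (Q *ᵥ xs) = xs ⬝ᵥ (Q *ᵥ xk) := by rw [dot_swap Q xk xs, hQs]
  have cQ3 : xk ⬝ᵥ (Q *ᵥ x1) = x1 ⬝ᵥ (Q *ᵥ xk) := by rw [dot_swap Q xk x1, hQs]
  have cm1 : lk ⬝ᵥ ls = ls ⬝ᵥ lk := dotProduct_comm _ _
  have cm2 : b ⬝ᵥ ls = ls ⬝ᵥ b := dotProduct_comm _ _
  have cm3 : b ⬝ᵥ lk = lk ⬝ᵥ b := dotProduct_comm _ _
  have cl1 : (A *ᵥ xs) ⬝ᵥ ls = ls ⬝ᵥ (A *ᵥ xs) := dotProduct_comm _ _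
  have cl2 : (A *ᵥ x1) ⬝ᵥ ls = ls ⬝ᵥ (A *ᵥ x1) := dotProduct_comm _ _
  have cl3 : (A *ᵥ xk) ⬝ᵥ ls = ls ⬝ᵥ (A *ᵥ xk) := dotProduct_comm _ _
  have cl4 : (A *ᵥ xs) ⬝ᵥ lk = lk ⬝ᵥ (A *ᵥ xs) := dotProduct_comm _ _
  have cl5 : (A *ᵥ x1) ⬝ᵥ lk = lk ⬝ᵥ (A *ᵥ x1) := dotProduct_comm _ _
  have cl6 : (A *ᵥ xk) ⬝ᵥ lk = lk ⬝ᵥ (A *ᵥ xk) := dotProduct_comm _ _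
  have cb1 : (A *ᵥ xs) ⬝ᵥ b = b ⬝ᵥ (A *ᵥ xs) := dotProduct_comm _ _
  have cb2 : (A *ᵥ x1) ⬝ᵥ b = b ⬝ᵥ (A *ᵥ x1) := dotProduct_comm _ _
  have cb3 : (A *ᵥ xk) ⬝ᵥ b = b ⬝ᵥ (A *ᵥ xk) := dotProduct_comm _ _
  have cA1 : (A *ᵥ x1) ⬝ᵥ (A *ᵥ xs) = (A *ᵥ xs) ⬝ᵥ (A *ᵥ x1) := dotProduct_comm _ _
  have cA2 : (A *ᵥ xk) ⬝ᵥ (A *ᵥ xs) = (A *ᵥ xs) ⬝ᵥ (A *ᵥ xk) := dotProduct_comm _ _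
  have cA3 : (A *ᵥ xk) ⬝ᵥ (A *ᵥ x1) = (A *ᵥ x1) ⬝ᵥ (A *ᵥ xk) := dotProduct_comm _ _
  -- Step A: first-order optimality condition at the minimizer, tested against xs
  have stepA : 0 ≤ θ xs - θ x1 +
      (-(lk ⬝ᵥ (A *ᵥ xs)) + lk ⬝ᵥ (A *ᵥ x1)
        + r * ((A *ᵥ (x1 - xk)) ⬝ᵥ (A *ᵥ (xs - x1)))
        + (xs - x1) ⬝ᵥ (Q *ᵥ (x1 - xk))) := by
    apply nonneg_of_small _ ((r * ((A *ᵥ (xs - x1)) ⬝ᵥ (A *ᵥ (xs - x1)))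
        + (xs - x1) ⬝ᵥ (Q *ᵥ (xs - x1))) / 2)
    intro t ht0 ht1
    have hzeq : x1 + t • (xs - x1) = (1 - t) • x1 + t • xs := by module
    have hzX : x1 + t • (xs - x1) ∈ X := by
      rw [hzeq]
      exact hXconvex hx1X hxsX (by linarith) ht0.le (by ring)
    have hm := hopt _ hzX
    have hcv := hθ.2 (Set.mem_univ x1) (Set.mem_univ xs)
      (by linarith : (0:ℝ) ≤ 1 - t) ht0.le (by ring)
    rw [← hzeq] at hcv
    apply div_t _ _ t ht0
    simp only [Matrix.add_mulVec, Matrix.smul_mulVec, ← Matrix.mulVec_mulVec,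
      Matrix.mulVec_sub, Matrix.mulVec_add, Matrix.mulVec_smul,
      sub_dotProduct, add_dotProduct, smul_dotProduct,
      neg_dotProduct, dotProduct_sub, dotProduct_add,
      dotProduct_smul, dotProduct_neg, smul_eq_mul, hswA,
      cQ1, cQ2, cQ3, cm1, cm2, cm3, cl1, cl2, cl3, cl4, cl5, cl6, cb1, cb2, cb3,
      cA1, cA2, cA3] at hm hcv ⊢
    linarith
  -- Step C: the solution-point inequality, tested at (x1, l1)
  have stepC := hsol (x1, l1) hx1X
  -- Key inequality
  have key : Hbil A Q r ((xs, ls) - (x1, l1)) ((xk, lk) - (x1, l1)) ≤ 0 := by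
    have hrne : r ≠ 0 := ne_of_gt hr
    have hd : lk - l1 = r • (A *ᵥ ((2:ℝ) • x1 - xk) - b) := by rw [hl]; abel
    have hT4 : 1 / r * ((ls - l1) ⬝ᵥ (lk - l1))
        = (ls - l1) ⬝ᵥ (A *ᵥ ((2:ℝ) • x1 - xk) - b) := by
      rw [hd, dotProduct_smul, smul_eq_mul]
      field_simp
    simp only [Hbil, Prod.mk_sub_mk]
    rw [hT4]
    simp only [pdot, Jmap, Prod.mk_sub_mk, ge_iff_le, hl,
      Matrix.add_mulVec, Matrix.smul_mulVec, ← Matrix.mulVec_mulVec,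
      Matrix.mulVec_sub, Matrix.mulVec_add, Matrix.mulVec_smul,
      sub_dotProduct, add_dotProduct, smul_dotProduct,
      neg_dotProduct, dotProduct_sub, dotProduct_add,
      dotProduct_smul, dotProduct_neg, smul_eq_mul, hswA,
      cQ1, cQ2, cQ3, cm1, cm2, cm3, cl1, cl2, cl3, cl4, cl5, cl6, cb1, cb2, cb3,
      cA1, cA2, cA3] at stepC stepA ⊢
    linarith [stepA, stepC]
  -- Final contraction identity
  have hid : ((xs, ls) : (Fin n → ℝ) × (Fin m → ℝ)) - (xk, lk)
      = ((xs, ls) - (x1, l1)) - ((xk, lk) - (x1, l1)) := by abel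
  simp only [HnormSq, hid, Hbil_sub_left, Hbil_sub_right] at key ⊢
  linarith [key,
    Hbil_comm A Q r hQs ((x1, l1) : (Fin n → ℝ) × (Fin m → ℝ)) ((xs, ls)),
    Hbil_comm A Q r hQs ((xk, lk) : (Fin n → ℝ) × (Fin m → ℝ)) ((xs, ls)),
    Hbil_comm A Q r hQs ((xk, lk) : (Fin n → ℝ) × (Fin m → ℝ)) ((x1, l1))]
end
end

section
/- Suppose the solution set M* is nonempty and the sequence (x^k, λ^k) is generated by P-ALM, i.e., x^{k+1} ∈ X minimizes x ↦ θ(x) − ⟨λ^k, Ax − b⟩ + (r/2)‖A(x − x^k)‖² + (1/2)⟨x − x^k, Q(x − x^k)⟩ over X and λ^{k+1} = λ^k − r(A(2x^{k+1} − x^k) − b), and additionally that θ is continuous on X. Then there exists a point w^∞ ∈ M* such that the sequence w^k = (x^k, λ^k) converges to w^∞. -/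
open Matrix Finset

noncomputable section

namespace Stmt7Aux

variable {n m k a : ℕ}

lemma dp_self_nonneg (u : Fin k → ℝ) : 0 ≤ u ⬝ᵥ u :=
  Finset.sum_nonneg fun i _ => mul_self_nonneg (u i)

lemma dp_self_pos {u : Fin k → ℝ} (h : u ≠ 0) : 0 < u ⬝ᵥ u :=
  ((dp_self_nonneg u).lt_or_eq).elim id fun h1 =>
    absurd (dotProduct_self_eq_zero.mp h1.symm) h

lemma dp_mulVec (M : Matrix (Fin a) (Fin k) ℝ) (u : Fin a → ℝ) (v : Fin k → ℝ) :
    u ⬝ᵥ (M *ᵥ v) = (Mᵀ *ᵥ u) ⬝ᵥ v := by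
  rw [Matrix.dotProduct_mulVec, Matrix.mulVec_transpose]

lemma dp_mulVec' (M : Matrix (Fin a) (Fin k) ℝ) (u : Fin k → ℝ) (v : Fin a → ℝ) :
    u ⬝ᵥ (Mᵀ *ᵥ v) = (M *ᵥ u) ⬝ᵥ v := by
  rw [dp_mulVec, Matrix.transpose_transpose]

lemma dp_Q_comm {Q : Matrix (Fin k) (Fin k) ℝ} (hQ : Qᵀ = Q) (u v : Fin k → ℝ) :
    u ⬝ᵥ (Q *ᵥ v) = v ⬝ᵥ (Q *ᵥ u) := by
  rw [dp_mulVec, hQ, dotProduct_comm]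

lemma continuous_dp {α : Type*} [TopologicalSpace α] {f g : α → Fin k → ℝ}
    (hf : Continuous f) (hg : Continuous g) : Continuous fun x => f x ⬝ᵥ g x := by
  simp only [dotProduct]
  exact continuous_finset_sum _ fun i _ =>
    ((continuous_apply i).comp hf).mul ((continuous_apply i).comp hg)

lemma continuous_mulVec {α : Type*} [TopologicalSpace α] (M : Matrix (Fin a) (Fin k) ℝ)
    {f : α → Fin k → ℝ} (hf : Continuous f) : Continuous fun x => M *ᵥ f x := by
  refine continuous_pi fun i => ?_
  simp only [Matrix.mulVec, dotProduct]
  exact continuous_finset_sum _ fun j _ => continuous_const.mul ((continuous_apply j).comp hf)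

lemma Hbil_eq (A : Matrix (Fin m) (Fin n) ℝ) (Q : Matrix (Fin n) (Fin n) ℝ) (r : ℝ)
    (w₁ w₂ : (Fin n → ℝ) × (Fin m → ℝ)) :
    Hbil A Q r w₁ w₂ = r * ((A *ᵥ w₁.1) ⬝ᵥ (A *ᵥ w₂.1)) + w₁.1 ⬝ᵥ (Q *ᵥ w₂.1)
      + (A *ᵥ w₁.1) ⬝ᵥ w₂.2 + w₁.2 ⬝ᵥ (A *ᵥ w₂.1) + 1 / r * (w₁.2 ⬝ᵥ w₂.2) := by
  simp only [Hbil, Matrix.add_mulVec, Matrix.smul_mulVec, ← Matrix.mulVec_mulVec,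
    dotProduct_add, dotProduct_smul, dp_mulVec' A, smul_eq_mul]

lemma Hbil_symm {A : Matrix (Fin m) (Fin n) ℝ} {Q : Matrix (Fin n) (Fin n) ℝ} (hQ : Qᵀ = Q)
    (r : ℝ) (w₁ w₂ : (Fin n → ℝ) × (Fin m → ℝ)) :
    Hbil A Q r w₁ w₂ = Hbil A Q r w₂ w₁ := by
  rw [Hbil_eq, Hbil_eq, dp_Q_comm hQ, dotProduct_comm (A *ᵥ w₁.1) (A *ᵥ w₂.1),
    dotProduct_comm (A *ᵥ w₁.1) w₂.2, dotProduct_comm w₁.2 (A *ᵥ w₂.1),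
    dotProduct_comm w₁.2 w₂.2]
  ring

lemma Hbil_add_left (A : Matrix (Fin m) (Fin n) ℝ) (Q : Matrix (Fin n) (Fin n) ℝ) (r : ℝ)
    (u v w : (Fin n → ℝ) × (Fin m → ℝ)) :
    Hbil A Q r (u + v) w = Hbil A Q r u w + Hbil A Q r v w := by
  simp only [Hbil, Prod.fst_add, Prod.snd_add, add_dotProduct]
  ring

lemma Hbil_add_right (A : Matrix (Fin m) (Fin n) ℝ) (Q : Matrix (Fin n) (Fin n) ℝ) (r : ℝ)
    (u v w : (Fin n → ℝ) × (Fin m → ℝ)) :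
    Hbil A Q r w (u + v) = Hbil A Q r w u + Hbil A Q r w v := by
  simp only [Hbil, Prod.fst_add, Prod.snd_add, Matrix.mulVec_add, dotProduct_add]
  ring

lemma Hbil_smul_smul (A : Matrix (Fin m) (Fin n) ℝ) (Q : Matrix (Fin n) (Fin n) ℝ) (r t : ℝ)
    (w : (Fin n → ℝ) × (Fin m → ℝ)) :
    Hbil A Q r (t • w) (t • w) = t ^ 2 * Hbil A Q r w w := by
  simp only [Hbil, Prod.smul_fst, Prod.smul_snd, Matrix.mulVec_smul, smul_dotProduct,
    dotProduct_smul, smul_eq_mul]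
  ring

lemma HnormSq_decomp (A : Matrix (Fin m) (Fin n) ℝ) (Q : Matrix (Fin n) (Fin n) ℝ)
    {r : ℝ} (hr : 0 < r) (w : (Fin n → ℝ) × (Fin m → ℝ)) :
    HnormSq A Q r w =
      (Real.sqrt r • (A *ᵥ w.1) + (Real.sqrt r)⁻¹ • w.2) ⬝ᵥ
        (Real.sqrt r • (A *ᵥ w.1) + (Real.sqrt r)⁻¹ • w.2) + w.1 ⬝ᵥ (Q *ᵥ w.1) := by
  have hs : Real.sqrt r * Real.sqrt r = r := Real.mul_self_sqrt hr.le
  have hs0 : Real.sqrt r ≠ 0 := by positivity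
  rw [HnormSq, Hbil_eq]
  simp only [dotProduct_add, add_dotProduct, smul_dotProduct, dotProduct_smul, smul_eq_mul,
    dotProduct_comm w.2 (A *ᵥ w.1)]
  field_simp
  linear_combination (-(r * (A *ᵥ w.1 ⬝ᵥ A *ᵥ w.1)) * Real.sqrt r ^ 2 + w.2 ⬝ᵥ w.2) * hs

lemma HnormSq_nonneg (A : Matrix (Fin m) (Fin n) ℝ) {Q : Matrix (Fin n) (Fin n) ℝ}
    (hQ : Q.PosDef) {r : ℝ} (hr : 0 < r) (w : (Fin n → ℝ) × (Fin m → ℝ)) :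
    0 ≤ HnormSq A Q r w := by
  rw [HnormSq_decomp A Q hr]
  have h1 : 0 ≤ w.1 ⬝ᵥ (Q *ᵥ w.1) := by
    rcases eq_or_ne w.1 0 with h | h
    · simp [h]
    · have := hQ.dotProduct_mulVec_pos h
      simpa using this.le
  have h2 := dp_self_nonneg (Real.sqrt r • (A *ᵥ w.1) + (Real.sqrt r)⁻¹ • w.2)
  linarith

lemma HnormSq_pos (A : Matrix (Fin m) (Fin n) ℝ) {Q : Matrix (Fin n) (Fin n) ℝ}
    (hQ : Q.PosDef) {r : ℝ} (hr : 0 < r) {w : (Fin n → ℝ) × (Fin m → ℝ)} (hw : w ≠ 0) :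
    0 < HnormSq A Q r w := by
  rw [HnormSq_decomp A Q hr]
  have h2 := dp_self_nonneg (Real.sqrt r • (A *ᵥ w.1) + (Real.sqrt r)⁻¹ • w.2)
  rcases eq_or_ne w.1 0 with h | h
  · have hw2 : w.2 ≠ 0 := by
      intro h2'
      exact hw (Prod.ext h h2')
    have hs : Real.sqrt r • (A *ᵥ w.1) + (Real.sqrt r)⁻¹ • w.2 = (Real.sqrt r)⁻¹ • w.2 := by
      simp [h]
    have hinv : (Real.sqrt r)⁻¹ ≠ 0 := by positivity
    have hsne : (Real.sqrt r)⁻¹ • w.2 ≠ 0 := smul_ne_zero hinv hw2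
    have hpos := dp_self_pos hsne
    rw [hs]
    have h1 : 0 ≤ w.1 ⬝ᵥ (Q *ᵥ w.1) := by simp [h]
    linarith
  · have := hQ.dotProduct_mulVec_pos h
    simp only [star_trivial] at this
    linarith

lemma continuous_Hbil (A : Matrix (Fin m) (Fin n) ℝ) (Q : Matrix (Fin n) (Fin n) ℝ) (r : ℝ) :
    Continuous fun p : ((Fin n → ℝ) × (Fin m → ℝ)) × ((Fin n → ℝ) × (Fin m → ℝ)) =>
      Hbil A Q r p.1 p.2 := by
  have c11 : Continuous fun p : ((Fin n → ℝ) × (Fin m → ℝ)) × ((Fin n → ℝ) × (Fin m → ℝ)) =>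
      p.1.1 := continuous_fst.fst
  have c12 : Continuous fun p : ((Fin n → ℝ) × (Fin m → ℝ)) × ((Fin n → ℝ) × (Fin m → ℝ)) =>
      p.1.2 := continuous_fst.snd
  have c21 : Continuous fun p : ((Fin n → ℝ) × (Fin m → ℝ)) × ((Fin n → ℝ) × (Fin m → ℝ)) =>
      p.2.1 := continuous_snd.fst
  have c22 : Continuous fun p : ((Fin n → ℝ) × (Fin m → ℝ)) × ((Fin n → ℝ) × (Fin m → ℝ)) =>
      p.2.2 := continuous_snd.snd
  unfold Hbil
  exact (((continuous_dp c11 (continuous_mulVec _ c21)).add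
    (continuous_dp c11 (continuous_mulVec _ c22))).add
    (continuous_dp c12 (continuous_mulVec _ c21))).add
    (continuous_const.mul (continuous_dp c12 c22))

/-- A continuous, 2-homogeneous, positive-definite function on a proper real normed space
is coercive. -/
lemma coercive_of_pos {E : Type*} [NormedAddCommGroup E] [NormedSpace ℝ E] [ProperSpace E]
    (f : E → ℝ) (hf : Continuous f) (hpos : ∀ v : E, v ≠ 0 → 0 < f v)
    (hhom : ∀ (t : ℝ) (v : E), f (t • v) = t ^ 2 * f v) :
    ∃ c : ℝ, 0 < c ∧ ∀ v : E, c * ‖v‖ ^ 2 ≤ f v := by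
  have hf0 : f 0 = 0 := by
    have := hhom 0 0
    simpa using this
  by_cases hE : ∃ v : E, v ≠ 0
  · obtain ⟨v₀, hv₀⟩ := hE
    have hsne : (Metric.sphere (0:E) 1).Nonempty := by
      refine ⟨‖v₀‖⁻¹ • v₀, ?_⟩
      simp [norm_smul, norm_ne_zero_iff.mpr hv₀, inv_mul_cancel₀ (norm_ne_zero_iff.mpr hv₀)]
    obtain ⟨u₀, hu₀mem, hu₀min⟩ :=
      (isCompact_sphere (0:E) 1).exists_isMinOn hsne hf.continuousOn
    have hu₀norm : ‖u₀‖ = 1 := by simpa using hu₀mem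
    have hu₀ne : u₀ ≠ 0 := by
      intro h; rw [h] at hu₀norm; simp at hu₀norm
    refine ⟨f u₀, hpos u₀ hu₀ne, fun v => ?_⟩
    rcases eq_or_ne v 0 with rfl | hv
    · simp [hf0]
    · have hnv : (0:ℝ) < ‖v‖ := norm_pos_iff.mpr hv
      have hmem : ‖v‖⁻¹ • v ∈ Metric.sphere (0:E) 1 := by
        simp [norm_smul, inv_mul_cancel₀ hnv.ne']
      have h1 : f u₀ ≤ f (‖v‖⁻¹ • v) := hu₀min hmem
      have h2 : f (‖v‖⁻¹ • v) = ‖v‖⁻¹ ^ 2 * f v := hhom _ _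
      rw [h2] at h1
      calc f u₀ * ‖v‖ ^ 2 ≤ ‖v‖ ^ 2 * (‖v‖⁻¹ ^ 2 * f v) := by
            nlinarith [sq_nonneg ‖v‖]
        _ = f v := by field_simp
  · push_neg at hE
    refine ⟨1, one_pos, fun v => ?_⟩
    rw [hE v, hf0]
    simp [hE v]

/-- Real helper: if `0 ≤ E + t C` for all small positive `t`, then `0 ≤ E`. -/
lemma limit_helper {E C : ℝ} (h : ∀ t : ℝ, 0 < t → t ≤ 1 → 0 ≤ E + t * C) : 0 ≤ E := by
  rcases le_or_gt C 0 with hC | hC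
  · have := h 1 one_pos le_rfl
    linarith
  · by_contra hE
    push_neg at hE
    have ht1 : (0:ℝ) < min 1 (-E / (2 * C)) := by
      exact lt_min one_pos (div_pos (by linarith) (by linarith))
    have := h (min 1 (-E / (2 * C))) ht1 (min_le_left _ _)
    have h2 : min 1 (-E / (2 * C)) * C ≤ (-E / (2 * C)) * C :=
      mul_le_mul_of_nonneg_right (min_le_right _ _) hC.le
    have h3 : (-E / (2 * C)) * C = -E / 2 := by field_simp
    linarith

lemma Hbil_neg_left (A : Matrix (Fin m) (Fin n) ℝ) (Q : Matrix (Fin n) (Fin n) ℝ) (r : ℝ)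
    (u w : (Fin n → ℝ) × (Fin m → ℝ)) :
    Hbil A Q r (-u) w = -Hbil A Q r u w := by
  simp only [Hbil, Prod.fst_neg, Prod.snd_neg, neg_dotProduct]
  ring

lemma Hbil_zero_right (A : Matrix (Fin m) (Fin n) ℝ) (Q : Matrix (Fin n) (Fin n) ℝ) (r : ℝ)
    (u : (Fin n → ℝ) × (Fin m → ℝ)) :
    Hbil A Q r u 0 = 0 := by
  simp [Hbil]

lemma pdot_neg_left (u v : (Fin n → ℝ) × (Fin m → ℝ)) : pdot (-u) v = -pdot u v := by
  simp only [pdot, Prod.fst_neg, Prod.snd_neg, neg_dotProduct]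
  ring

lemma skew (A : Matrix (Fin m) (Fin n) ℝ) (b : Fin m → ℝ)
    (w₁ w₂ : (Fin n → ℝ) × (Fin m → ℝ)) :
    pdot (w₁ - w₂) (Jmap A b w₁) = pdot (w₁ - w₂) (Jmap A b w₂) := by
  simp only [pdot, Jmap, Prod.fst_sub, Prod.snd_sub, dotProduct_neg, dotProduct_sub,
    sub_dotProduct, Matrix.mulVec_sub, dp_mulVec' A,
    dotProduct_comm w₁.2 (A *ᵥ w₁.1), dotProduct_comm w₂.2 (A *ᵥ w₁.1),
    dotProduct_comm w₁.2 (A *ᵥ w₂.1), dotProduct_comm w₂.2 (A *ᵥ w₂.1),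
    dotProduct_comm w₁.2 b, dotProduct_comm w₂.2 b]
  ring

lemma continuous_pdotJ (A : Matrix (Fin m) (Fin n) ℝ) (b : Fin m → ℝ)
    (wv : (Fin n → ℝ) × (Fin m → ℝ)) :
    Continuous fun v : (Fin n → ℝ) × (Fin m → ℝ) => pdot (wv - v) (Jmap A b v) := by
  simp only [pdot, Jmap, Prod.fst_sub, Prod.snd_sub]
  have h1 : Continuous fun v : (Fin n → ℝ) × (Fin m → ℝ) => wv.1 - v.1 :=
    continuous_const.sub continuous_fst
  have h2 : Continuous fun v : (Fin n → ℝ) × (Fin m → ℝ) => wv.2 - v.2 :=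
    continuous_const.sub continuous_snd
  exact (continuous_dp h1 ((continuous_mulVec Aᵀ continuous_snd).neg)).add
    (continuous_dp h2 ((continuous_mulVec A continuous_fst).sub continuous_const))

lemma subVI {θ : (Fin n → ℝ) → ℝ} (hθ : ConvexOn ℝ Set.univ θ)
    {X : Set (Fin n → ℝ)} (hXconvex : Convex ℝ X)
    {A : Matrix (Fin m) (Fin n) ℝ} {b : Fin m → ℝ} {r : ℝ}
    {Q : Matrix (Fin n) (Fin n) ℝ} (hQsym : Qᵀ = Q)
    {lamk : Fin m → ℝ} {x0 x1 : Fin n → ℝ} (hx1 : x1 ∈ X)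
    (hmin : ∀ z ∈ X,
      θ x1 - lamk ⬝ᵥ (A *ᵥ x1 - b) + r / 2 * ((A *ᵥ (x1 - x0)) ⬝ᵥ (A *ᵥ (x1 - x0)))
          + 1 / 2 * ((x1 - x0) ⬝ᵥ (Q *ᵥ (x1 - x0)))
        ≤ θ z - lamk ⬝ᵥ (A *ᵥ z - b) + r / 2 * ((A *ᵥ (z - x0)) ⬝ᵥ (A *ᵥ (z - x0)))
          + 1 / 2 * ((z - x0) ⬝ᵥ (Q *ᵥ (z - x0)))) :
    ∀ z ∈ X, 0 ≤ θ z - θ x1 +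
      (z - x1) ⬝ᵥ (-(Aᵀ *ᵥ lamk) + (r • (Aᵀ * A) + Q) *ᵥ (x1 - x0)) := by
  intro z hz
  have main : ∀ t : ℝ, 0 < t → t ≤ 1 →
      0 ≤ (θ z - θ x1 + (z - x1) ⬝ᵥ (-(Aᵀ *ᵥ lamk) + (r • (Aᵀ * A) + Q) *ᵥ (x1 - x0)))
        + t * (r / 2 * ((A *ᵥ (z - x1)) ⬝ᵥ (A *ᵥ (z - x1)))
          + 1 / 2 * ((z - x1) ⬝ᵥ (Q *ᵥ (z - x1)))) := by
    intro t ht0 ht1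
    have hzt_eq : x1 + t • (z - x1) = (1 - t) • x1 + t • z := by module
    have hztX : x1 + t • (z - x1) ∈ X := by
      rw [hzt_eq]; exact hXconvex hx1 hz (by linarith) ht0.le (by ring)
    have hθt : θ (x1 + t • (z - x1)) ≤ (1 - t) * θ x1 + t * θ z := by
      rw [hzt_eq]
      simpa using hθ.2 (Set.mem_univ x1) (Set.mem_univ z) (by linarith : (0:ℝ) ≤ 1 - t)
        ht0.le (by ring)
    have hmin' := hmin _ hztX
    have e1 : lamk ⬝ᵥ (A *ᵥ (x1 + t • (z - x1)) - b)
        = lamk ⬝ᵥ (A *ᵥ x1 - b) + t * (lamk ⬝ᵥ (A *ᵥ (z - x1))) := by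
      simp only [Matrix.mulVec_add, Matrix.mulVec_smul, dotProduct_sub, dotProduct_add,
        dotProduct_smul, smul_eq_mul]
      ring
    have hx10 : x1 + t • (z - x1) - x0 = (x1 - x0) + t • (z - x1) := by abel
    have e2 : (A *ᵥ (x1 + t • (z - x1) - x0)) ⬝ᵥ (A *ᵥ (x1 + t • (z - x1) - x0))
        = (A *ᵥ (x1 - x0)) ⬝ᵥ (A *ᵥ (x1 - x0))
          + 2 * t * ((A *ᵥ (z - x1)) ⬝ᵥ (A *ᵥ (x1 - x0)))
          + t ^ 2 * ((A *ᵥ (z - x1)) ⬝ᵥ (A *ᵥ (z - x1))) := by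
      rw [hx10]
      simp only [Matrix.mulVec_add, Matrix.mulVec_smul, dotProduct_add, add_dotProduct,
        dotProduct_smul, smul_dotProduct, smul_eq_mul,
        dotProduct_comm (A *ᵥ (x1 - x0)) (A *ᵥ (z - x1))]
      ring
    have e3 : (x1 + t • (z - x1) - x0) ⬝ᵥ (Q *ᵥ (x1 + t • (z - x1) - x0))
        = (x1 - x0) ⬝ᵥ (Q *ᵥ (x1 - x0)) + 2 * t * ((z - x1) ⬝ᵥ (Q *ᵥ (x1 - x0)))
          + t ^ 2 * ((z - x1) ⬝ᵥ (Q *ᵥ (z - x1))) := by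
      rw [hx10]
      simp only [Matrix.mulVec_add, Matrix.mulVec_smul, dotProduct_add, add_dotProduct,
        dotProduct_smul, smul_dotProduct, smul_eq_mul, dp_Q_comm hQsym (x1 - x0) (z - x1)]
      ring
    have eL : (z - x1) ⬝ᵥ (-(Aᵀ *ᵥ lamk) + (r • (Aᵀ * A) + Q) *ᵥ (x1 - x0))
        = -(lamk ⬝ᵥ (A *ᵥ (z - x1))) + r * ((A *ᵥ (z - x1)) ⬝ᵥ (A *ᵥ (x1 - x0)))
          + (z - x1) ⬝ᵥ (Q *ᵥ (x1 - x0)) := by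
      simp only [dotProduct_add, Matrix.add_mulVec, Matrix.smul_mulVec,
        ← Matrix.mulVec_mulVec, dotProduct_smul, dp_mulVec' A, dotProduct_neg, smul_eq_mul,
        dotProduct_comm (A *ᵥ (z - x1)) lamk]
      ring
    rw [e1, e2, e3] at hmin'
    rw [eL]
    nlinarith [hmin', hθt, ht0, sq_nonneg t]
  exact limit_helper main

lemma pred_key {A : Matrix (Fin m) (Fin n) ℝ} {b : Fin m → ℝ} {r : ℝ} (hr : r ≠ 0)
    {Q : Matrix (Fin n) (Fin n) ℝ}
    {x0 x1 : Fin n → ℝ} {lam0 : Fin m → ℝ}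
    (w : (Fin n → ℝ) × (Fin m → ℝ)) :
    pdot (w - (x1, lam0 - r • (A *ᵥ ((2:ℝ) • x1 - x0) - b)))
        (Jmap A b (x1, lam0 - r • (A *ᵥ ((2:ℝ) • x1 - x0) - b)))
      - Hbil A Q r (w - (x1, lam0 - r • (A *ᵥ ((2:ℝ) • x1 - x0) - b)))
        ((x0, lam0) - (x1, lam0 - r • (A *ᵥ ((2:ℝ) • x1 - x0) - b)))
      = (w.1 - x1) ⬝ᵥ (-(Aᵀ *ᵥ lam0) + (r • (Aᵀ * A) + Q) *ᵥ (x1 - x0)) := by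
  simp only [Hbil, pdot, Jmap, Prod.fst_sub, Prod.snd_sub, Prod.mk_sub_mk,
    Matrix.mulVec_sub, Matrix.mulVec_add, Matrix.mulVec_smul, Matrix.add_mulVec,
    Matrix.smul_mulVec, ← Matrix.mulVec_mulVec,
    dotProduct_sub, sub_dotProduct, dotProduct_add, add_dotProduct,
    dotProduct_smul, smul_dotProduct, dotProduct_neg, neg_dotProduct, smul_eq_mul,
    dp_mulVec' A, sub_sub_cancel]
  field_simp
  ring

end Stmt7Aux

/-- Theorem 2.3, convergence of the whole sequence to a solution. -/
theorem stmt_7 (n m : ℕ) (θ : (Fin n → ℝ) → ℝ) (hθ : ConvexOn ℝ Set.univ θ)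
    (X : Set (Fin n → ℝ)) (hXne : X.Nonempty) (hXclosed : IsClosed X) (hXconvex : Convex ℝ X)
    (hθcont : ContinuousOn θ X)
    (A : Matrix (Fin m) (Fin n) ℝ) (b : Fin m → ℝ) (r : ℝ) (hr : 0 < r)
    (Q : Matrix (Fin n) (Fin n) ℝ) (hQ : Q.PosDef)
    (hsol : ∃ ws : (Fin n → ℝ) × (Fin m → ℝ), SolPoint θ X A b ws)
    (x : ℕ → Fin n → ℝ) (lam : ℕ → Fin m → ℝ) (halg : PALM θ X A b r Q x lam) :
    ∃ winf : (Fin n → ℝ) × (Fin m → ℝ), SolPoint θ X A b winf ∧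
      Filter.Tendsto (fun k : ℕ => ((x k, lam k) : (Fin n → ℝ) × (Fin m → ℝ)))
        Filter.atTop (nhds winf) := by
  classical
  open Stmt7Aux in
  obtain ⟨halg1, halg2⟩ := halg
  obtain ⟨ws0, hws0⟩ := hsol
  have hQsym : Qᵀ = Q := hQ.1
  set ww : ℕ → (Fin n → ℝ) × (Fin m → ℝ) := fun k => (x k, lam k) with hww
  -- variational characterization of the x-update
  have hVI : ∀ k : ℕ, ∀ z ∈ X, 0 ≤ θ z - θ (x (k + 1)) +
      (z - x (k + 1)) ⬝ᵥ (-(Aᵀ *ᵥ lam k) + (r • (Aᵀ * A) + Q) *ᵥ (x (k + 1) - x k)) :=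
    fun k => subVI hθ hXconvex hQsym (halg1 k).1 (halg1 k).2
  -- the prediction inequality
  have hwk1 : ∀ k : ℕ, ww (k + 1)
      = (x (k + 1), lam k - r • (A *ᵥ ((2:ℝ) • x (k + 1) - x k) - b)) := by
    intro k
    rw [hww]
    simp only
    rw [halg2 k]
  have hpred : ∀ k : ℕ, ∀ wv : (Fin n → ℝ) × (Fin m → ℝ), wv.1 ∈ X →
      Hbil A Q r (wv - ww (k + 1)) (ww k - ww (k + 1))
        ≤ θ wv.1 - θ (x (k + 1)) + pdot (wv - ww (k + 1)) (Jmap A b (ww (k + 1))) := by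
    intro k wv hwv
    have h0 := hVI k wv.1 hwv
    have hk := pred_key (A := A) (b := b) (r := r) hr.ne' (Q := Q) (x0 := x k)
      (x1 := x (k + 1)) (lam0 := lam k) wv
    rw [hwk1 k]
    have hwk : ww k = (x k, lam k) := rfl
    rw [hwk]
    linarith [h0, hk]
  -- the contraction inequality, for an arbitrary solution point
  have hcontr : ∀ ws : (Fin n → ℝ) × (Fin m → ℝ), SolPoint θ X A b ws → ∀ k : ℕ,
      HnormSq A Q r (ww (k + 1) - ws)
        ≤ HnormSq A Q r (ww k - ws) - HnormSq A Q r (ww k - ww (k + 1)) := by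
    intro ws hws k
    have hx1X : (ww (k + 1)).1 ∈ X := (halg1 k).1
    have hp := hpred k ws hws.1
    have hs := hws.2 (ww (k + 1)) hx1X
    have hskew := skew A b (ww (k + 1)) ws
    have hθeq : θ (ww (k + 1)).1 = θ (x (k + 1)) := rfl
    rw [hθeq] at hs
    have hneg1 : ws - ww (k + 1) = -(ww (k + 1) - ws) := by abel
    have hcross : 0 ≤ Hbil A Q r (ww (k + 1) - ws) (ww k - ww (k + 1)) := by
      rw [hneg1, Hbil_neg_left, pdot_neg_left] at hp
      rw [← hskew] at hs
      linarith
    have hdecomp : ww k - ws = (ww (k + 1) - ws) + (ww k - ww (k + 1)) := by abel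
    have hid : HnormSq A Q r (ww k - ws) = HnormSq A Q r (ww (k + 1) - ws)
        + HnormSq A Q r (ww k - ww (k + 1))
        + 2 * Hbil A Q r (ww (k + 1) - ws) (ww k - ww (k + 1)) := by
      rw [HnormSq, hdecomp, Hbil_add_left, Hbil_add_right, Hbil_add_right,
        Hbil_symm hQsym r (ww k - ww (k + 1)) (ww (k + 1) - ws)]
      rw [HnormSq, HnormSq]
      ring
    linarith
  -- continuity and coercivity of the H-norm
  have hHcont : Continuous fun v : (Fin n → ℝ) × (Fin m → ℝ) => HnormSq A Q r v := by
    have := (continuous_Hbil A Q r).comp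
      (continuous_id.prodMk continuous_id :
        Continuous fun v : (Fin n → ℝ) × (Fin m → ℝ) => (v, v))
    simpa [HnormSq, Function.comp_def] using this
  obtain ⟨c, hc, hcoer⟩ := coercive_of_pos (HnormSq A Q r) hHcont
    (fun v hv => HnormSq_pos A hQ hr hv)
    (fun t v => Hbil_smul_smul A Q r t v)
  -- monotonicity of the distances to ws0
  have hmono0 : ∀ k : ℕ, HnormSq A Q r (ww (k + 1) - ws0) ≤ HnormSq A Q r (ww k - ws0) := by
    intro k
    have h1 := hcontr ws0 hws0 k
    have h2 := HnormSq_nonneg A hQ hr (ww k - ww (k + 1))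
    linarith
  have hanti0 : Antitone fun k => HnormSq A Q r (ww k - ws0) :=
    antitone_nat_of_succ_le hmono0
  have hbdd0 : BddBelow (Set.range fun k => HnormSq A Q r (ww k - ws0)) := by
    refine ⟨0, fun y hy => ?_⟩
    obtain ⟨k, rfl⟩ := hy
    exact HnormSq_nonneg A hQ hr _
  have hconv0 : Filter.Tendsto (fun k => HnormSq A Q r (ww k - ws0)) Filter.atTop
      (nhds (⨅ k, HnormSq A Q r (ww k - ws0))) := tendsto_atTop_ciInf hanti0 hbdd0
  -- successive differences tend to zero
  have hdiff0 : Filter.Tendsto (fun k => HnormSq A Q r (ww k - ww (k + 1))) Filter.atTop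
      (nhds 0) := by
    have hg : Filter.Tendsto (fun k => HnormSq A Q r (ww k - ws0)
        - HnormSq A Q r (ww (k + 1) - ws0)) Filter.atTop (nhds 0) := by
      have h2 : Filter.Tendsto (fun k => HnormSq A Q r (ww (k + 1) - ws0)) Filter.atTop
          (nhds (⨅ k, HnormSq A Q r (ww k - ws0))) :=
        hconv0.comp (Filter.tendsto_add_atTop_nat 1)
      have := hconv0.sub h2
      simpa using this
    refine squeeze_zero (fun k => HnormSq_nonneg A hQ hr _) (fun k => ?_) hg
    have := hcontr ws0 hws0 k
    linarith
  have hstep0 : Filter.Tendsto (fun k => ww k - ww (k + 1)) Filter.atTop (nhds 0) := by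
    rw [tendsto_zero_iff_norm_tendsto_zero]
    have hb : ∀ k : ℕ, ‖ww k - ww (k + 1)‖
        ≤ Real.sqrt (HnormSq A Q r (ww k - ww (k + 1)) / c) := by
      intro k
      have h1 := hcoer (ww k - ww (k + 1))
      have h2 : ‖ww k - ww (k + 1)‖ ^ 2 ≤ HnormSq A Q r (ww k - ww (k + 1)) / c := by
        rw [le_div_iff₀ hc]
        nlinarith
      calc ‖ww k - ww (k + 1)‖ = Real.sqrt (‖ww k - ww (k + 1)‖ ^ 2) := by
            rw [Real.sqrt_sq (norm_nonneg _)]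
        _ ≤ Real.sqrt (HnormSq A Q r (ww k - ww (k + 1)) / c) := Real.sqrt_le_sqrt h2
    have hg : Filter.Tendsto (fun k => Real.sqrt (HnormSq A Q r (ww k - ww (k + 1)) / c))
        Filter.atTop (nhds 0) := by
      have h1 : Filter.Tendsto (fun k => HnormSq A Q r (ww k - ww (k + 1)) / c)
          Filter.atTop (nhds 0) := by
        simpa using hdiff0.div_const c
      have := (Real.continuous_sqrt.tendsto 0).comp h1
      simpa [Function.comp_def] using this
    exact squeeze_zero (fun k => norm_nonneg _) hb hg
  -- boundedness of the iterates
  have hbound : ∀ k : ℕ, ww k ∈ Metric.closedBall ws0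
      (Real.sqrt (HnormSq A Q r (ww 0 - ws0) / c)) := by
    intro k
    rw [Metric.mem_closedBall, dist_eq_norm]
    have h1 := hcoer (ww k - ws0)
    have h2 : HnormSq A Q r (ww k - ws0) ≤ HnormSq A Q r (ww 0 - ws0) :=
      hanti0 (Nat.zero_le k)
    have h3 : ‖ww k - ws0‖ ^ 2 ≤ HnormSq A Q r (ww 0 - ws0) / c := by
      rw [le_div_iff₀ hc]
      nlinarith
    calc ‖ww k - ws0‖ = Real.sqrt (‖ww k - ws0‖ ^ 2) := by rw [Real.sqrt_sq (norm_nonneg _)]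
      _ ≤ Real.sqrt (HnormSq A Q r (ww 0 - ws0) / c) := Real.sqrt_le_sqrt h3
  -- extract a convergent subsequence
  obtain ⟨winf, _, φ, hφ, hφtend⟩ :=
    tendsto_subseq_of_bounded Metric.isBounded_closedBall hbound
  have hWtend : Filter.Tendsto (fun j => ww (φ j)) Filter.atTop (nhds winf) := hφtend
  have hstepφ : Filter.Tendsto (fun j => ww (φ j) - ww (φ j + 1)) Filter.atTop (nhds 0) :=
    hstep0.comp hφ.tendsto_atTop
  have hWtend1 : Filter.Tendsto (fun j => ww (φ j + 1)) Filter.atTop (nhds winf) := by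
    have heq : (fun j => ww (φ j + 1))
        = fun j => ww (φ j) - (ww (φ j) - ww (φ j + 1)) := by
      funext j; abel
    rw [heq]
    simpa using hWtend.sub hstepφ
  have hXtend1 : Filter.Tendsto (fun j => x (φ j + 1)) Filter.atTop (nhds winf.1) := by
    have := (continuous_fst.tendsto winf).comp hWtend1
    simpa [Function.comp_def] using this
  have hmemX : winf.1 ∈ X :=
    hXclosed.mem_of_tendsto hXtend1 (Filter.Eventually.of_forall fun j => (halg1 (φ j)).1)
  -- θ along the subsequence
  have hθtend : Filter.Tendsto (fun j => θ (x (φ j + 1))) Filter.atTop (nhds (θ winf.1)) := by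
    have hwithin : Filter.Tendsto (fun j => x (φ j + 1)) Filter.atTop
        (nhdsWithin winf.1 X) :=
      tendsto_nhdsWithin_iff.mpr ⟨hXtend1, Filter.Eventually.of_forall fun j => (halg1 (φ j)).1⟩
    exact (hθcont winf.1 hmemX).tendsto.comp hwithin
  -- the limit point is a solution
  have hsolinf : SolPoint θ X A b winf := by
    refine ⟨hmemX, fun wv hwv => ?_⟩
    have hineq : ∀ j : ℕ, Hbil A Q r (wv - ww (φ j + 1)) (ww (φ j) - ww (φ j + 1))
        ≤ θ wv.1 - θ (x (φ j + 1)) + pdot (wv - ww (φ j + 1)) (Jmap A b (ww (φ j + 1))) :=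
      fun j => hpred (φ j) wv hwv
    have hL : Filter.Tendsto
        (fun j => Hbil A Q r (wv - ww (φ j + 1)) (ww (φ j) - ww (φ j + 1)))
        Filter.atTop (nhds 0) := by
      have hpair : Filter.Tendsto
          (fun j => ((wv - ww (φ j + 1), ww (φ j) - ww (φ j + 1)) :
            ((Fin n → ℝ) × (Fin m → ℝ)) × ((Fin n → ℝ) × (Fin m → ℝ))))
          Filter.atTop (nhds (wv - winf, 0)) := by
        exact ((tendsto_const_nhds.sub hWtend1).prodMk_nhds hstepφ)
      have := ((continuous_Hbil A Q r).tendsto (wv - winf, 0)).comp hpair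
      simpa [Function.comp_def, Hbil_zero_right] using this
    have hR : Filter.Tendsto
        (fun j => θ wv.1 - θ (x (φ j + 1)) + pdot (wv - ww (φ j + 1)) (Jmap A b (ww (φ j + 1))))
        Filter.atTop (nhds (θ wv.1 - θ winf.1 + pdot (wv - winf) (Jmap A b winf))) := by
      have hpd : Filter.Tendsto (fun j => pdot (wv - ww (φ j + 1)) (Jmap A b (ww (φ j + 1))))
          Filter.atTop (nhds (pdot (wv - winf) (Jmap A b winf))) := by
        have := ((continuous_pdotJ A b wv).tendsto winf).comp hWtend1
        simpa [Function.comp_def] using this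
      exact (tendsto_const_nhds.sub hθtend).add hpd
    have h0 := le_of_tendsto_of_tendsto' hL hR hineq
    linarith
  -- full convergence to winf
  have hanti : Antitone fun k => HnormSq A Q r (ww k - winf) :=
    antitone_nat_of_succ_le fun k => by
      have h1 := hcontr winf hsolinf k
      have h2 := HnormSq_nonneg A hQ hr (ww k - ww (k + 1))
      linarith
  have hbddi : BddBelow (Set.range fun k => HnormSq A Q r (ww k - winf)) := by
    refine ⟨0, fun y hy => ?_⟩
    obtain ⟨k, rfl⟩ := hy
    exact HnormSq_nonneg A hQ hr _
  have hconvi : Filter.Tendsto (fun k => HnormSq A Q r (ww k - winf)) Filter.atTop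
      (nhds (⨅ k, HnormSq A Q r (ww k - winf))) := tendsto_atTop_ciInf hanti hbddi
  have hsubi : Filter.Tendsto (fun j => HnormSq A Q r (ww (φ j) - winf)) Filter.atTop
      (nhds 0) := by
    have hdz : Filter.Tendsto (fun j => ww (φ j) - winf) Filter.atTop (nhds 0) := by
      simpa using hWtend.sub (tendsto_const_nhds (x := winf))
    have := (hHcont.tendsto 0).comp hdz
    simpa [Function.comp_def, HnormSq, Hbil_zero_right] using this
  have hinf0 : (⨅ k, HnormSq A Q r (ww k - winf)) = 0 :=
    tendsto_nhds_unique (hconvi.comp hφ.tendsto_atTop) hsubi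
  have hfull : Filter.Tendsto (fun k => HnormSq A Q r (ww k - winf)) Filter.atTop (nhds 0) := by
    rw [← hinf0]
    exact hconvi
  refine ⟨winf, hsolinf, ?_⟩
  have hnorm : Filter.Tendsto (fun k => ‖ww k - winf‖) Filter.atTop (nhds 0) := by
    have hb : ∀ k : ℕ, ‖ww k - winf‖ ≤ Real.sqrt (HnormSq A Q r (ww k - winf) / c) := by
      intro k
      have h1 := hcoer (ww k - winf)
      have h2 : ‖ww k - winf‖ ^ 2 ≤ HnormSq A Q r (ww k - winf) / c := by
        rw [le_div_iff₀ hc]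
        nlinarith
      calc ‖ww k - winf‖ = Real.sqrt (‖ww k - winf‖ ^ 2) := by
            rw [Real.sqrt_sq (norm_nonneg _)]
        _ ≤ _ := Real.sqrt_le_sqrt h2
    have hg : Filter.Tendsto (fun k => Real.sqrt (HnormSq A Q r (ww k - winf) / c))
        Filter.atTop (nhds 0) := by
      have h1 : Filter.Tendsto (fun k => HnormSq A Q r (ww k - winf) / c)
          Filter.atTop (nhds 0) := by
        simpa using hfull.div_const c
      have := (Real.continuous_sqrt.tendsto 0).comp h1
      simpa [Function.comp_def] using this
    exact squeeze_zero (fun k => norm_nonneg _) hb hg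
  exact tendsto_iff_norm_sub_tendsto_zero.mpr hnorm
end
end

section
/- Suppose the sequence (x^k, λ^k) is generated by P-ALM, i.e., x^{k+1} ∈ X minimizes x ↦ θ(x) − ⟨λ^k, Ax − b⟩ + (r/2)‖A(x − x^k)‖² + (1/2)⟨x − x^k, Q(x − x^k)⟩ over X and λ^{k+1} = λ^k − r(A(2x^{k+1} − x^k) − b). Then for every w* ∈ M*, the series ∑_{k=0}^{∞} ‖w^k − w^{k+1}‖²_H converges and ∑_{k=0}^{∞} ‖w^k − w^{k+1}‖²_H ≤ ‖w* − w^0‖²_H; consequently ‖w^k − w^{k+1}‖_H → 0 as k → ∞. -/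
open Matrix Finset

noncomputable section

variable {n m : ℕ}

lemma dps_nonneg (v : Fin n → ℝ) : 0 ≤ v ⬝ᵥ v :=
  Finset.sum_nonneg fun i _ => mul_self_nonneg _

lemma dAT (A : Matrix (Fin m) (Fin n) ℝ) (x : Fin n → ℝ) (y : Fin m → ℝ) :
    x ⬝ᵥ (Aᵀ *ᵥ y) = (A *ᵥ x) ⬝ᵥ y := by
  rw [Matrix.dotProduct_mulVec, Matrix.vecMul_transpose]

lemma dATA (A : Matrix (Fin m) (Fin n) ℝ) (x y : Fin n → ℝ) :
    x ⬝ᵥ ((Aᵀ * A) *ᵥ y) = (A *ᵥ x) ⬝ᵥ (A *ᵥ y) := by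
  rw [← Matrix.mulVec_mulVec, dAT]

lemma Qsym {Q : Matrix (Fin n) (Fin n) ℝ} (hQt : Qᵀ = Q) (u v : Fin n → ℝ) :
    u ⬝ᵥ (Q *ᵥ v) = v ⬝ᵥ (Q *ᵥ u) := by
  rw [Matrix.dotProduct_mulVec, ← Matrix.mulVec_transpose, hQt, dotProduct_comm]

lemma Hbil_eq (A : Matrix (Fin m) (Fin n) ℝ) (Q : Matrix (Fin n) (Fin n) ℝ) (r : ℝ)
    (v w : (Fin n → ℝ) × (Fin m → ℝ)) :
    Hbil A Q r v w = r * ((A *ᵥ v.1) ⬝ᵥ (A *ᵥ w.1)) + v.1 ⬝ᵥ (Q *ᵥ w.1)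
      + (A *ᵥ v.1) ⬝ᵥ w.2 + (A *ᵥ w.1) ⬝ᵥ v.2 + 1 / r * (v.2 ⬝ᵥ w.2) := by
  unfold Hbil
  rw [Matrix.add_mulVec, Matrix.smul_mulVec, dotProduct_add, dotProduct_smul, dATA, dAT,
    dotProduct_comm v.2 (A *ᵥ w.1)]
  push_cast [smul_eq_mul]
  ring

lemma Hbil_symm {A : Matrix (Fin m) (Fin n) ℝ} {Q : Matrix (Fin n) (Fin n) ℝ} {r : ℝ}
    (hQt : Qᵀ = Q) (v w : (Fin n → ℝ) × (Fin m → ℝ)) :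
    Hbil A Q r v w = Hbil A Q r w v := by
  rw [Hbil_eq, Hbil_eq]
  linear_combination r * dotProduct_comm (A *ᵥ v.1) (A *ᵥ w.1) + Qsym hQt v.1 w.1
    + 1 / r * dotProduct_comm v.2 w.2

lemma Hbil_add_left (A : Matrix (Fin m) (Fin n) ℝ) (Q : Matrix (Fin n) (Fin n) ℝ) (r : ℝ)
    (a b c : (Fin n → ℝ) × (Fin m → ℝ)) :
    Hbil A Q r (a + b) c = Hbil A Q r a c + Hbil A Q r b c := by
  simp only [Hbil, Prod.fst_add, Prod.snd_add, add_dotProduct]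
  ring

lemma Hbil_add_right (A : Matrix (Fin m) (Fin n) ℝ) (Q : Matrix (Fin n) (Fin n) ℝ) (r : ℝ)
    (a b c : (Fin n → ℝ) × (Fin m → ℝ)) :
    Hbil A Q r a (b + c) = Hbil A Q r a b + Hbil A Q r a c := by
  simp only [Hbil, Prod.fst_add, Prod.snd_add, Matrix.mulVec_add, dotProduct_add]
  ring

lemma Hsq_add {A : Matrix (Fin m) (Fin n) ℝ} {Q : Matrix (Fin n) (Fin n) ℝ} {r : ℝ}
    (hQt : Qᵀ = Q) (b c : (Fin n → ℝ) × (Fin m → ℝ)) :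
    HnormSq A Q r (b + c) = HnormSq A Q r b + 2 * Hbil A Q r b c + HnormSq A Q r c := by
  unfold HnormSq
  rw [Hbil_add_left, Hbil_add_right, Hbil_add_right, Hbil_symm hQt c b]
  ring

lemma HnormSq_neg (A : Matrix (Fin m) (Fin n) ℝ) (Q : Matrix (Fin n) (Fin n) ℝ) (r : ℝ)
    (w : (Fin n → ℝ) × (Fin m → ℝ)) : HnormSq A Q r (-w) = HnormSq A Q r w := by
  simp only [HnormSq, Hbil, Prod.fst_neg, Prod.snd_neg, Matrix.mulVec_neg, dotProduct_neg,
    neg_dotProduct, neg_neg]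

lemma HnormSq_nonneg {A : Matrix (Fin m) (Fin n) ℝ} {Q : Matrix (Fin n) (Fin n) ℝ} {r : ℝ}
    (hr : 0 < r) (hQ : Q.PosSemidef) (w : (Fin n → ℝ) × (Fin m → ℝ)) :
    0 ≤ HnormSq A Q r w := by
  have hq : 0 ≤ w.1 ⬝ᵥ (Q *ᵥ w.1) := by simpa using hQ.dotProduct_mulVec_nonneg w.1
  have h0 : 0 ≤ (r • (A *ᵥ w.1) + w.2) ⬝ᵥ (r • (A *ᵥ w.1) + w.2) := dps_nonneg _
  have key : HnormSq A Q r w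
      = 1 / r * ((r • (A *ᵥ w.1) + w.2) ⬝ᵥ (r • (A *ᵥ w.1) + w.2)) + w.1 ⬝ᵥ (Q *ᵥ w.1) := by
    rw [HnormSq, Hbil_eq]
    simp only [dotProduct_add, add_dotProduct, dotProduct_smul, smul_dotProduct, smul_eq_mul]
    field_simp
    linear_combination r * dotProduct_comm (A *ᵥ w.1) w.2
  rw [key]
  have : 0 ≤ 1 / r * ((r • (A *ᵥ w.1) + w.2) ⬝ᵥ (r • (A *ᵥ w.1) + w.2)) :=
    mul_nonneg (by positivity) h0
  linarith

lemma keyVI {θ : (Fin n → ℝ) → ℝ} (hθ : ConvexOn ℝ Set.univ θ)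
    {X : Set (Fin n → ℝ)} (hXconvex : Convex ℝ X)
    {A : Matrix (Fin m) (Fin n) ℝ} {Q : Matrix (Fin n) (Fin n) ℝ} {r : ℝ} (hr : 0 < r)
    (hQ : Q.PosSemidef) (hQt : Qᵀ = Q) {b : Fin m → ℝ} {lamk : Fin m → ℝ}
    {u xk : Fin n → ℝ} (hu : u ∈ X)
    (hmin : ∀ z ∈ X,
      θ u - lamk ⬝ᵥ (A *ᵥ u - b)
          + r / 2 * ((A *ᵥ (u - xk)) ⬝ᵥ (A *ᵥ (u - xk)))
          + 1 / 2 * ((u - xk) ⬝ᵥ (Q *ᵥ (u - xk)))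
        ≤ θ z - lamk ⬝ᵥ (A *ᵥ z - b)
          + r / 2 * ((A *ᵥ (z - xk)) ⬝ᵥ (A *ᵥ (z - xk)))
          + 1 / 2 * ((z - xk) ⬝ᵥ (Q *ᵥ (z - xk))))
    (z : Fin n → ℝ) (hz : z ∈ X) :
    0 ≤ θ z - θ u + (-(lamk ⬝ᵥ (A *ᵥ (z - u)))
      + r * ((A *ᵥ (u - xk)) ⬝ᵥ (A *ᵥ (z - u))) + (z - u) ⬝ᵥ (Q *ᵥ (u - xk))) := by
  have hq2 : 0 ≤ (z - u) ⬝ᵥ (Q *ᵥ (z - u)) := by simpa using hQ.dotProduct_mulVec_nonneg (z - u)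
  have hd2 : 0 ≤ (A *ᵥ (z - u)) ⬝ᵥ (A *ᵥ (z - u)) := dps_nonneg _
  have key : ∀ t : ℝ, 0 < t → t ≤ 1 →
      0 ≤ t * (θ z - θ u + (-(lamk ⬝ᵥ (A *ᵥ (z - u)))
          + r * ((A *ᵥ (u - xk)) ⬝ᵥ (A *ᵥ (z - u))) + (z - u) ⬝ᵥ (Q *ᵥ (u - xk))))
        + t ^ 2 * (r / 2 * ((A *ᵥ (z - u)) ⬝ᵥ (A *ᵥ (z - u)))
          + 1 / 2 * ((z - u) ⬝ᵥ (Q *ᵥ (z - u)))) := by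
    intro t ht ht1
    have hmem : u + t • (z - u) ∈ X := by
      have h2 := hXconvex hu hz (by linarith : (0:ℝ) ≤ 1 - t) ht.le (by ring)
      have heq : (1 - t) • u + t • z = u + t • (z - u) := by module
      rwa [heq] at h2
    have hm := hmin _ hmem
    have hθc : θ (u + t • (z - u)) ≤ (1 - t) * θ u + t * θ z := by
      have h3 := hθ.2 (Set.mem_univ u) (Set.mem_univ z)
        (by linarith : (0:ℝ) ≤ 1 - t) ht.le (by ring)
      rw [show (1 - t) • u + t • z = u + t • (z - u) from by module] at h3
      simpa using h3
    rw [show u + t • (z - u) - xk = (u - xk) + t • (z - u) from by abel] at hm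
    simp only [Matrix.mulVec_add, Matrix.mulVec_sub, Matrix.mulVec_smul, dotProduct_add,
      add_dotProduct, dotProduct_sub, sub_dotProduct, dotProduct_smul, smul_dotProduct,
      smul_eq_mul] at hm ⊢
    simp only [Qsym hQt u z, Qsym hQt xk z, Qsym hQt xk u,
      dotProduct_comm (A *ᵥ u) (A *ᵥ z), dotProduct_comm (A *ᵥ xk) (A *ᵥ z),
      dotProduct_comm (A *ᵥ xk) (A *ᵥ u)] at hm ⊢
    nlinarith [hm, hθc]
  set c := θ z - θ u + (-(lamk ⬝ᵥ (A *ᵥ (z - u)))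
      + r * ((A *ᵥ (u - xk)) ⬝ᵥ (A *ᵥ (z - u))) + (z - u) ⬝ᵥ (Q *ᵥ (u - xk))) with hcdef
  set C := r / 2 * ((A *ᵥ (z - u)) ⬝ᵥ (A *ᵥ (z - u)))
      + 1 / 2 * ((z - u) ⬝ᵥ (Q *ᵥ (z - u))) with hCdef
  have hC0 : 0 ≤ C := by
    rw [hCdef]
    have := mul_nonneg (by positivity : (0:ℝ) ≤ r / 2) hd2
    linarith
  by_contra hc
  push_neg at hc
  have hCp : (0:ℝ) < C + 1 := by linarith
  have hcpos : (0:ℝ) < -c := by linarith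
  set t := min 1 (-c / (2 * (C + 1))) with htdef
  have ht0 : 0 < t := lt_min one_pos (div_pos hcpos (by linarith))
  have ht1 : t ≤ 1 := min_le_left _ _
  have htc : t ≤ -c / (2 * (C + 1)) := min_le_right _ _
  have hk := key t ht0 ht1
  have h4 : t * C ≤ -c / 2 := by
    have h5 : t * (C + 1) ≤ (-c / (2 * (C + 1))) * (C + 1) :=
      mul_le_mul_of_nonneg_right htc (by linarith)
    have h6 : (-c / (2 * (C + 1))) * (C + 1) = -c / 2 := by field_simp
    nlinarith [ht0.le]
  have h7 : t * (t * C) ≤ t * (-c / 2) := mul_le_mul_of_nonneg_left h4 ht0.le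
  have h8 : 0 < t * (-c / 2) := mul_pos ht0 (by linarith)
  clear_value c C t
  nlinarith [hk, h7, h8]

lemma cross {θ : (Fin n → ℝ) → ℝ}
    {A : Matrix (Fin m) (Fin n) ℝ} {Q : Matrix (Fin n) (Fin n) ℝ} {r : ℝ} (hr : 0 < r)
    {b : Fin m → ℝ} {u xk : Fin n → ℝ} {lam1 lamk : Fin m → ℝ}
    {ws : (Fin n → ℝ) × (Fin m → ℝ)}
    (hVI : 0 ≤ θ ws.1 - θ u + (-(lamk ⬝ᵥ (A *ᵥ (ws.1 - u)))
      + r * ((A *ᵥ (u - xk)) ⬝ᵥ (A *ᵥ (ws.1 - u))) + (ws.1 - u) ⬝ᵥ (Q *ᵥ (u - xk))))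
    (hsol : 0 ≤ θ u - θ ws.1 + pdot ((u, lam1) - ws) (Jmap A b ws))
    (hupd : lam1 = lamk - r • (A *ᵥ ((2:ℝ) • u - xk) - b)) :
    0 ≤ Hbil A Q r (ws - (u, lam1)) ((u, lam1) - (xk, lamk)) := by
  have hrne : r ≠ 0 := ne_of_gt hr
  have hb : A *ᵥ ws.1 - b = A *ᵥ (ws.1 - u) - A *ᵥ (u - xk) - (1 / r) • (lam1 - lamk) := by
    rw [hupd, sub_sub_cancel_left, smul_neg, smul_smul, one_div, inv_mul_cancel₀ hrne, one_smul]
    simp only [Matrix.mulVec_sub, Matrix.mulVec_smul]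
    module
  have hexp : Hbil A Q r (ws - (u, lam1)) ((u, lam1) - (xk, lamk))
      = (θ ws.1 - θ u + (-(lamk ⬝ᵥ (A *ᵥ (ws.1 - u)))
          + r * ((A *ᵥ (u - xk)) ⬝ᵥ (A *ᵥ (ws.1 - u))) + (ws.1 - u) ⬝ᵥ (Q *ᵥ (u - xk))))
        + (θ u - θ ws.1 + pdot ((u, lam1) - ws) (Jmap A b ws)) := by
    rw [Hbil_eq]
    simp only [pdot, Jmap, Prod.fst_sub, Prod.snd_sub]
    rw [hb]
    rw [show u - ws.1 = -(ws.1 - u) from (neg_sub ws.1 u).symm]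
    simp only [Matrix.mulVec_neg, dotProduct_neg, neg_dotProduct, neg_neg, dAT]
    simp only [dotProduct_sub, sub_dotProduct, dotProduct_add, add_dotProduct,
      dotProduct_smul, smul_dotProduct, smul_eq_mul]
    linear_combination r * dotProduct_comm (A *ᵥ (ws.1 - u)) (A *ᵥ (u - xk))
      + dotProduct_comm (A *ᵥ (ws.1 - u)) lam1 - dotProduct_comm (A *ᵥ (ws.1 - u)) lamk
      - dotProduct_comm (A *ᵥ (ws.1 - u)) ws.2
      - dotProduct_comm (A *ᵥ (u - xk)) lam1 + dotProduct_comm (A *ᵥ (u - xk)) ws.2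
  rw [hexp]
  linarith [hVI, hsol]

lemma stepIneq {A : Matrix (Fin m) (Fin n) ℝ} {Q : Matrix (Fin n) (Fin n) ℝ} {r : ℝ}
    (hQt : Qᵀ = Q) {u xk : Fin n → ℝ} {lam1 lamk : Fin m → ℝ}
    {ws : (Fin n → ℝ) × (Fin m → ℝ)}
    (hc : 0 ≤ Hbil A Q r (ws - (u, lam1)) ((u, lam1) - (xk, lamk))) :
    HnormSq A Q r (ws - (u, lam1)) + HnormSq A Q r ((xk, lamk) - (u, lam1))
      ≤ HnormSq A Q r (ws - (xk, lamk)) := by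
  have hdecomp : ws - (xk, lamk) = (ws - (u, lam1)) + ((u, lam1) - (xk, lamk)) := by abel
  rw [hdecomp, Hsq_add hQt,
    show ((xk, lamk) : (Fin n → ℝ) × (Fin m → ℝ)) - (u, lam1) = -((u, lam1) - (xk, lamk)) from by
      abel,
    HnormSq_neg]
  linarith [hc]

/-- Summability of the successive differences in `H`-norm:
`∑ₖ ‖wᵏ − w^{k+1}‖²_H ≤ ‖w* − w⁰‖²_H`, hence `‖wᵏ − w^{k+1}‖_H → 0`. -/
theorem stmt_8 (n m : ℕ) (θ : (Fin n → ℝ) → ℝ) (hθ : ConvexOn ℝ Set.univ θ)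
    (X : Set (Fin n → ℝ)) (hXne : X.Nonempty) (hXclosed : IsClosed X) (hXconvex : Convex ℝ X)
    (A : Matrix (Fin m) (Fin n) ℝ) (b : Fin m → ℝ) (r : ℝ) (hr : 0 < r)
    (Q : Matrix (Fin n) (Fin n) ℝ) (hQ : Q.PosDef)
    (x : ℕ → Fin n → ℝ) (lam : ℕ → Fin m → ℝ) (halg : PALM θ X A b r Q x lam) :
    ∀ ws : (Fin n → ℝ) × (Fin m → ℝ), SolPoint θ X A b ws →
      Summable (fun k : ℕ => HnormSq A Q r ((x k, lam k) - (x (k + 1), lam (k + 1)))) ∧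
      (∑' k : ℕ, HnormSq A Q r ((x k, lam k) - (x (k + 1), lam (k + 1)))) ≤
        HnormSq A Q r (ws - (x 0, lam 0)) ∧
      Filter.Tendsto
        (fun k : ℕ => Real.sqrt (HnormSq A Q r ((x k, lam k) - (x (k + 1), lam (k + 1)))))
        Filter.atTop (nhds 0) := by
  intro ws hws
  have hQsd : Q.PosSemidef := hQ.posSemidef
  have hQt : Qᵀ = Q := by
    have h := hQ.1
    rw [Matrix.IsHermitian, Matrix.conjTranspose_eq_transpose_of_trivial] at h
    exact h
  set f : ℕ → ℝ := fun k => HnormSq A Q r ((x k, lam k) - (x (k + 1), lam (k + 1))) with hf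
  have hf0 : ∀ k, 0 ≤ f k := fun k => HnormSq_nonneg hr hQsd _
  have hstep : ∀ k, HnormSq A Q r (ws - (x (k + 1), lam (k + 1))) + f k
      ≤ HnormSq A Q r (ws - (x k, lam k)) := by
    intro k
    apply stepIneq hQt
    apply cross (θ := θ) hr
    · exact keyVI hθ hXconvex hr hQsd hQt (halg.1 k).1 (halg.1 k).2 ws.1 hws.1
    · have h := hws.2 (x (k + 1), lam (k + 1)) (halg.1 k).1
      simpa using h
    · exact halg.2 k
  have hbound : ∀ N, ∑ k ∈ Finset.range N, f k + HnormSq A Q r (ws - (x N, lam N))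
      ≤ HnormSq A Q r (ws - (x 0, lam 0)) := by
    intro N
    induction N with
    | zero => simp
    | succ N ih =>
      rw [Finset.sum_range_succ]
      linarith [hstep N, ih]
  have hbound' : ∀ N, ∑ k ∈ Finset.range N, f k ≤ HnormSq A Q r (ws - (x 0, lam 0)) := by
    intro N
    have h1 := hbound N
    have h2 := HnormSq_nonneg (A := A) hr hQsd (ws - (x N, lam N))
    linarith
  have hsummable : Summable f := summable_of_sum_range_le hf0 hbound'
  refine ⟨hsummable, Real.tsum_le_of_sum_range_le hf0 hbound', ?_⟩
  have htend : Filter.Tendsto f Filter.atTop (nhds 0) := hsummable.tendsto_atTop_zero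
  have := (Real.continuous_sqrt.tendsto 0).comp htend
  rw [Real.sqrt_zero] at this
  exact this
end
end

section
/- Suppose the solution set M* is nonempty and the sequence (x^k, λ^k) is generated by P-ALM, i.e., x^{k+1} ∈ X minimizes x ↦ θ(x) − ⟨λ^k, Ax − b⟩ + (r/2)‖A(x − x^k)‖² + (1/2)⟨x − x^k, Q(x − x^k)⟩ over X and λ^{k+1} = λ^k − r(A(2x^{k+1} − x^k) − b). Define s^k = (rAᵀA + Q)(x^k − x^{k−1}) + Aᵀ(λ^k − λ^{k−1}) for k ≥ 1. Then there exists a constant ϱ > 0, depending only on A, Q, r, and the initial point, such that for every integer k ≥ 1 there exists an integer t with 1 ≤ t ≤ k satisfying ‖x^{t−1} − x^t‖² ≤ ϱ/k and ‖s^t‖² ≤ ϱ/k. -/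
open Matrix Finset

noncomputable section

namespace PALMaux

lemma dot_self_nonneg {N : ℕ} (v : Fin N → ℝ) : 0 ≤ v ⬝ᵥ v :=
  Finset.sum_nonneg fun _ _ => mul_self_nonneg _

lemma dot_self_eq_zero {N : ℕ} {v : Fin N → ℝ} (h : v ⬝ᵥ v = 0) : v = 0 := by
  funext i
  have h1 := (Finset.sum_eq_zero_iff_of_nonneg (fun j (_ : j ∈ univ) => mul_self_nonneg (v j))).1 h i (mem_univ i)
  have := mul_self_eq_zero.1 h1
  simpa using this

lemma flip {N M : ℕ} (A : Matrix (Fin M) (Fin N) ℝ) (u : Fin N → ℝ) (l : Fin M → ℝ) :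
    u ⬝ᵥ (Aᵀ *ᵥ l) = (A *ᵥ u) ⬝ᵥ l := by
  rw [Matrix.dotProduct_mulVec, Matrix.vecMul_transpose, dotProduct_comm]

lemma symflip {N : ℕ} (S : Matrix (Fin N) (Fin N) ℝ) (hS : Sᵀ = S) (u v : Fin N → ℝ) :
    u ⬝ᵥ (S *ᵥ v) = v ⬝ᵥ (S *ᵥ u) := by
  calc u ⬝ᵥ (S *ᵥ v) = u ⬝ᵥ (Sᵀ *ᵥ v) := by rw [hS]
    _ = (S *ᵥ u) ⬝ᵥ v := flip S u v
    _ = v ⬝ᵥ (S *ᵥ u) := dotProduct_comm _ _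

lemma opbound {N M : ℕ} (B : Matrix (Fin M) (Fin N) ℝ) :
    ∃ c : ℝ, 0 ≤ c ∧ ∀ v : Fin N → ℝ, (B *ᵥ v) ⬝ᵥ (B *ᵥ v) ≤ c * (v ⬝ᵥ v) := by
  refine ⟨∑ i, (B i) ⬝ᵥ (B i), Finset.sum_nonneg fun i _ => dot_self_nonneg _, fun v => ?_⟩
  have h : ∀ i, (B *ᵥ v) i * (B *ᵥ v) i ≤ ((B i) ⬝ᵥ (B i)) * (v ⬝ᵥ v) := by
    intro i
    have h2 := Finset.sum_mul_sq_le_sq_mul_sq Finset.univ (B i) v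
    have e1 : (B *ᵥ v) i = ∑ j, B i j * v j := rfl
    have e2 : (B i) ⬝ᵥ (B i) = ∑ j, B i j ^ 2 := by simp [dotProduct, sq]
    have e3 : v ⬝ᵥ v = ∑ j, v j ^ 2 := by simp [dotProduct, sq]
    rw [e1, e2, e3]
    calc (∑ j, B i j * v j) * (∑ j, B i j * v j) = (∑ j, B i j * v j) ^ 2 := (sq _).symm
      _ ≤ _ := h2
  calc (B *ᵥ v) ⬝ᵥ (B *ᵥ v) = ∑ i, (B *ᵥ v) i * (B *ᵥ v) i := rfl
    _ ≤ ∑ i, ((B i) ⬝ᵥ (B i)) * (v ⬝ᵥ v) := Finset.sum_le_sum fun i _ => h i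
    _ = (∑ i, (B i) ⬝ᵥ (B i)) * (v ⬝ᵥ v) := by rw [Finset.sum_mul]

lemma small_tau (a bb : ℝ) (h : ∀ τ : ℝ, 0 < τ → τ ≤ 1 → 0 ≤ a + τ * bb) : 0 ≤ a := by
  by_contra hc
  push_neg at hc
  rcases le_or_gt bb 0 with hb | hb
  · have := h 1 one_pos le_rfl; linarith
  · have hap : 0 < -a / (2 * bb) := div_pos (by linarith) (by linarith)
    have hτ : 0 < min 1 (-a / (2 * bb)) := lt_min one_pos hap
    have h2 := h _ hτ (min_le_left _ _)
    have h3 : min 1 (-a / (2 * bb)) * bb ≤ (-a / (2 * bb)) * bb :=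
      mul_le_mul_of_nonneg_right (min_le_right _ _) hb.le
    have h4 : (-a / (2 * bb)) * bb = -a / 2 := by field_simp
    linarith

lemma posdef_lower {N : ℕ} (Q : Matrix (Fin N) (Fin N) ℝ) (hQ : Q.PosDef) :
    ∃ μ : ℝ, 0 < μ ∧ ∀ v : Fin N → ℝ, μ * (v ⬝ᵥ v) ≤ v ⬝ᵥ (Q *ᵥ v) := by
  rcases Nat.eq_zero_or_pos N with h0 | hN
  · refine ⟨1, one_pos, fun v => ?_⟩
    subst h0
    simp [dotProduct]
  · set S : Set (Fin N → ℝ) := {v | v ⬝ᵥ v = 1} with hSdef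
    have hcont : Continuous fun v : Fin N → ℝ => v ⬝ᵥ (Q *ᵥ v) := by
      show Continuous fun v : Fin N → ℝ => ∑ i, v i * ∑ j, Q i j * v j
      apply continuous_finset_sum; intro i _
      exact (continuous_apply i).mul
        (continuous_finset_sum _ fun j _ => continuous_const.mul (continuous_apply j))
    have hcont2 : Continuous fun v : Fin N → ℝ => v ⬝ᵥ v := by
      apply continuous_finset_sum; intro i _
      exact (continuous_apply i).mul (continuous_apply i)
    have hclosed : IsClosed S := isClosed_eq hcont2 continuous_const
    have hbdd : Bornology.IsBounded S := by
      refine (Metric.isBounded_closedBall (x := (0 : Fin N → ℝ)) (r := 1)).subset ?_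
      intro v hv
      simp only [Metric.mem_closedBall, dist_zero_right]
      rw [pi_norm_le_iff_of_nonneg zero_le_one]
      intro i
      have h1 : v i * v i ≤ v ⬝ᵥ v :=
        Finset.single_le_sum (f := fun j => v j * v j) (fun j _ => mul_self_nonneg _) (mem_univ i)
    
      have h2 : v i * v i ≤ 1 := by rw [hv] at h1; exact h1
      rw [Real.norm_eq_abs]
      nlinarith [abs_nonneg (v i), sq_abs (v i)]
    have hScompact : IsCompact S := Metric.isCompact_of_isClosed_isBounded hclosed hbdd
    have hSne : S.Nonempty := by
      refine ⟨Pi.single ⟨0, hN⟩ 1, ?_⟩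
      simp [hSdef, dotProduct, Pi.single_apply]
    obtain ⟨v0, hv0S, hmin⟩ := hScompact.exists_isMinOn hSne hcont.continuousOn
    have hv0 : v0 ⬝ᵥ v0 = 1 := hv0S
    have hv0ne : v0 ≠ 0 := by
      intro h; rw [h] at hv0; simp [dotProduct] at hv0
    have hμpos : 0 < v0 ⬝ᵥ (Q *ᵥ v0) := by
      have := hQ.dotProduct_mulVec_pos hv0ne
      simpa using this
    refine ⟨v0 ⬝ᵥ (Q *ᵥ v0), hμpos, fun v => ?_⟩
    rcases eq_or_ne v 0 with rfl | hv
    · simp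
    · have hvvne : v ⬝ᵥ v ≠ 0 := fun h => hv (dot_self_eq_zero h)
      have hvv : 0 < v ⬝ᵥ v := lt_of_le_of_ne (dot_self_nonneg v) (Ne.symm hvvne)
      set c := Real.sqrt (v ⬝ᵥ v) with hcdef
      have hc : 0 < c := Real.sqrt_pos.2 hvv
      have hcc : c * c = v ⬝ᵥ v := Real.mul_self_sqrt (dot_self_nonneg v)
      have hu : (c⁻¹ • v) ∈ S := by
        simp only [hSdef, Set.mem_setOf_eq, smul_dotProduct, dotProduct_smul, smul_eq_mul]
        rw [← hcc]; field_simp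
      have h2 : v0 ⬝ᵥ (Q *ᵥ v0) ≤ (c⁻¹ • v) ⬝ᵥ (Q *ᵥ (c⁻¹ • v)) := hmin hu
      have h3 : (c⁻¹ • v) ⬝ᵥ (Q *ᵥ (c⁻¹ • v)) = (c⁻¹ * c⁻¹) * (v ⬝ᵥ (Q *ᵥ v)) := by
        rw [Matrix.mulVec_smul]
        simp only [smul_dotProduct, dotProduct_smul, smul_eq_mul]
        ring
      have h2' : v0 ⬝ᵥ (Q *ᵥ v0) ≤ (c⁻¹ * c⁻¹) * (v ⬝ᵥ (Q *ᵥ v)) := by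
        rw [h3] at h2; exact h2
      have h4 : v0 ⬝ᵥ (Q *ᵥ v0) * (c * c) ≤ (c⁻¹ * c⁻¹) * (v ⬝ᵥ (Q *ᵥ v)) * (c * c) :=
        mul_le_mul_of_nonneg_right h2' (by positivity)
      have h5 : (c⁻¹ * c⁻¹) * (v ⬝ᵥ (Q *ᵥ v)) * (c * c) = v ⬝ᵥ (Q *ᵥ v) := by
        field_simp
      rw [h5] at h4
      rw [← hcc]
      linarith


lemma two_norm {N : ℕ} (u w : Fin N → ℝ) :
    (u + w) ⬝ᵥ (u + w) ≤ 2 * (u ⬝ᵥ u) + 2 * (w ⬝ᵥ w) := by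
  have h := dot_self_nonneg (u - w)
  simp only [dotProduct_add, add_dotProduct, dotProduct_sub, sub_dotProduct] at *
  rw [dotProduct_comm w u] at *
  linarith

end PALMaux

/-- Theorem 2.4, pointwise `O(1/k)` rate. -/
theorem stmt_10 (n m : ℕ) (θ : (Fin n → ℝ) → ℝ) (hθ : ConvexOn ℝ Set.univ θ)
    (X : Set (Fin n → ℝ)) (hXne : X.Nonempty) (hXclosed : IsClosed X) (hXconvex : Convex ℝ X)
    (A : Matrix (Fin m) (Fin n) ℝ) (b : Fin m → ℝ) (r : ℝ) (hr : 0 < r)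
    (Q : Matrix (Fin n) (Fin n) ℝ) (hQ : Q.PosDef)
    (hsol : ∃ ws : (Fin n → ℝ) × (Fin m → ℝ), SolPoint θ X A b ws)
    (x : ℕ → Fin n → ℝ) (lam : ℕ → Fin m → ℝ) (halg : PALM θ X A b r Q x lam)
    (s : ℕ → Fin n → ℝ)
    (hs : ∀ k : ℕ, 1 ≤ k →
      s k = (r • (Aᵀ * A) + Q) *ᵥ (x k - x (k - 1)) + Aᵀ *ᵥ (lam k - lam (k - 1))) :
    ∃ ϱ : ℝ, 0 < ϱ ∧ ∀ k : ℕ, 1 ≤ k → ∃ t : ℕ, 1 ≤ t ∧ t ≤ k ∧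
      (x (t - 1) - x t) ⬝ᵥ (x (t - 1) - x t) ≤ ϱ / (k : ℝ) ∧
      s t ⬝ᵥ s t ≤ ϱ / (k : ℝ) := by
  classical
  obtain ⟨⟨xs, ls⟩, hxsX, hVI⟩ := hsol
  obtain ⟨hsub, hlam⟩ := halg
  simp only at hxsX
  have hrne : r ≠ 0 := ne_of_gt hr
  have hQsym : Qᵀ = Q := by
    have h := hQ.1
    rwa [Matrix.IsHermitian, Matrix.conjTranspose_eq_transpose_of_trivial] at h
  have hQpsd : ∀ y : Fin n → ℝ, 0 ≤ y ⬝ᵥ (Q *ᵥ y) := fun y => by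
    simpa using hQ.posSemidef.dotProduct_mulVec_nonneg y
  set P : Matrix (Fin n) (Fin n) ℝ := r • (Aᵀ * A) + Q with hPdef
  have hPsym : Pᵀ = P := by
    rw [hPdef, Matrix.transpose_add, Matrix.transpose_smul, Matrix.transpose_mul,
      Matrix.transpose_transpose, hQsym]
  have hPdot : ∀ u v : Fin n → ℝ,
      u ⬝ᵥ (P *ᵥ v) = r * ((A *ᵥ u) ⬝ᵥ (A *ᵥ v)) + u ⬝ᵥ (Q *ᵥ v) := by
    intro u v
    rw [hPdef, Matrix.add_mulVec, dotProduct_add, Matrix.smul_mulVec, dotProduct_smul,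
      smul_eq_mul, ← Matrix.mulVec_mulVec, PALMaux.flip]
  have hHns : ∀ (y : Fin n → ℝ) (l : Fin m → ℝ), HnormSq A Q r (y, l)
      = y ⬝ᵥ (Q *ᵥ y) + 1 / r * ((r • (A *ᵥ y) + l) ⬝ᵥ (r • (A *ᵥ y) + l)) := by
    intro y l
    have h1 := hPdot y y
    have h2 : y ⬝ᵥ (Aᵀ *ᵥ l) = (A *ᵥ y) ⬝ᵥ l := PALMaux.flip A y l
    have h3 : l ⬝ᵥ (A *ᵥ y) = (A *ᵥ y) ⬝ᵥ l := dotProduct_comm _ _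
    simp only [HnormSq, Hbil, ← hPdef]
    rw [h1, h2, h3]
    simp only [add_dotProduct, dotProduct_add, smul_dotProduct, dotProduct_smul, smul_eq_mul]
    rw [dotProduct_comm l (A *ᵥ y)]
    field_simp
    ring
  have hHnn : ∀ (y : Fin n → ℝ) (l : Fin m → ℝ), 0 ≤ HnormSq A Q r (y, l) := by
    intro y l
    rw [hHns]
    have h1 := hQpsd y
    have h2 := PALMaux.dot_self_nonneg (r • (A *ᵥ y) + l)
    have h3 : (0:ℝ) ≤ 1 / r := by positivity
    nlinarith
  have hexpand : ∀ (c1 d1 : Fin n → ℝ) (c2 d2 : Fin m → ℝ),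
      HnormSq A Q r (c1 + d1, c2 + d2)
        = HnormSq A Q r (c1, c2) + 2 * Hbil A Q r (c1, c2) (d1, d2)
          + HnormSq A Q r (d1, d2) := by
    intro c1 d1 c2 d2
    simp only [HnormSq, Hbil, ← hPdef]
    simp only [Matrix.mulVec_add, dotProduct_add, add_dotProduct, PALMaux.flip]
    rw [PALMaux.symflip P hPsym d1 c1,
      dotProduct_comm c2 (A *ᵥ d1), dotProduct_comm c2 (A *ᵥ c1),
      dotProduct_comm d2 (A *ᵥ c1), dotProduct_comm d2 (A *ᵥ d1),
      dotProduct_comm d2 c2]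
    ring
  have key : ∀ k : ℕ, ∀ z ∈ X, 0 ≤ θ z - θ (x (k+1))
      + (z - x (k+1)) ⬝ᵥ (P *ᵥ (x (k+1) - x k) - Aᵀ *ᵥ lam k) := by
    intro k z hz
    obtain ⟨hxpX, hmin⟩ := hsub k
    set xp := x (k+1) with hxp
    set xk := x k with hxk
    set d := z - xp with hd
    apply PALMaux.small_tau _ (1/2 * (d ⬝ᵥ (P *ᵥ d)))
    intro τ hτ0 hτ1
    have he : xp + τ • d = (1 - τ) • xp + τ • z := by rw [hd]; module
    have hconv : xp + τ • d ∈ X := by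
      rw [he]; exact hXconvex hxpX hz (by linarith) hτ0.le (by ring)
    have hmin2 := hmin _ hconv
    have hθc : θ (xp + τ • d) ≤ (1 - τ) * θ xp + τ * θ z := by
      rw [he]
      have := hθ.2 (Set.mem_univ xp) (Set.mem_univ z) (by linarith : (0:ℝ) ≤ 1 - τ) hτ0.le
        (by ring)
      simpa [smul_eq_mul] using this
    have harg : xp + τ • d - xk = (xp - xk) + τ • d := by abel
    have hA1 : (A *ᵥ (xp + τ • d - xk)) ⬝ᵥ (A *ᵥ (xp + τ • d - xk))
        = (A *ᵥ (xp - xk)) ⬝ᵥ (A *ᵥ (xp - xk))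
          + 2 * τ * ((A *ᵥ d) ⬝ᵥ (A *ᵥ (xp - xk))) + τ^2 * ((A *ᵥ d) ⬝ᵥ (A *ᵥ d)) := by
      rw [harg, Matrix.mulVec_add, Matrix.mulVec_smul]
      simp only [dotProduct_add, add_dotProduct, dotProduct_smul, smul_dotProduct, smul_eq_mul]
      rw [dotProduct_comm (A *ᵥ (xp - xk)) (A *ᵥ d)]
      ring
    have hQ1 : (xp + τ • d - xk) ⬝ᵥ (Q *ᵥ (xp + τ • d - xk))
        = (xp - xk) ⬝ᵥ (Q *ᵥ (xp - xk)) + 2 * τ * (d ⬝ᵥ (Q *ᵥ (xp - xk)))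
          + τ^2 * (d ⬝ᵥ (Q *ᵥ d)) := by
      rw [harg, Matrix.mulVec_add, Matrix.mulVec_smul]
      simp only [dotProduct_add, add_dotProduct, dotProduct_smul, smul_dotProduct, smul_eq_mul]
      rw [PALMaux.symflip Q hQsym (xp - xk) d]
      ring
    have hL1 : lam k ⬝ᵥ (A *ᵥ (xp + τ • d) - b)
        = lam k ⬝ᵥ (A *ᵥ xp - b) + τ * (lam k ⬝ᵥ (A *ᵥ d)) := by
      rw [Matrix.mulVec_add, Matrix.mulVec_smul,
        show A *ᵥ xp + τ • (A *ᵥ d) - b = (A *ᵥ xp - b) + τ • (A *ᵥ d) from by abel,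
        dotProduct_add, dotProduct_smul, smul_eq_mul]
    have hPu := hPdot d (xp - xk)
    have hPd := hPdot d d
    have hAT : d ⬝ᵥ (Aᵀ *ᵥ lam k) = lam k ⬝ᵥ (A *ᵥ d) := by
      rw [PALMaux.flip, dotProduct_comm]
    have hdsub : d ⬝ᵥ (P *ᵥ (xp - xk) - Aᵀ *ᵥ lam k)
        = d ⬝ᵥ (P *ᵥ (xp - xk)) - d ⬝ᵥ (Aᵀ *ᵥ lam k) := dotProduct_sub _ _ _
    have hid : (1 - τ) * θ xp + τ * θ z
        - lam k ⬝ᵥ (A *ᵥ (xp + τ • d) - b)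
        + r / 2 * ((A *ᵥ (xp + τ • d - xk)) ⬝ᵥ (A *ᵥ (xp + τ • d - xk)))
        + 1 / 2 * ((xp + τ • d - xk) ⬝ᵥ (Q *ᵥ (xp + τ • d - xk)))
        - (θ xp - lam k ⬝ᵥ (A *ᵥ xp - b)
          + r / 2 * ((A *ᵥ (xp - xk)) ⬝ᵥ (A *ᵥ (xp - xk)))
          + 1 / 2 * ((xp - xk) ⬝ᵥ (Q *ᵥ (xp - xk))))
        = τ * ((θ z - θ xp + d ⬝ᵥ (P *ᵥ (xp - xk) - Aᵀ *ᵥ lam k))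
            + τ * (1/2 * (d ⬝ᵥ (P *ᵥ d)))) := by
      rw [hA1, hQ1, hL1, hdsub, hPu, hPd, hAT]
      ring
    have h0 : 0 ≤ τ * ((θ z - θ xp + d ⬝ᵥ (P *ᵥ (xp - xk) - Aᵀ *ᵥ lam k))
        + τ * (1/2 * (d ⬝ᵥ (P *ᵥ d)))) := by
      rw [← hid]
      linarith [hmin2, hθc]
    by_contra hneg
    push_neg at hneg
    have := mul_neg_of_pos_of_neg hτ0 hneg
    linarith
  have hcross : ∀ k : ℕ, 0 ≤ Hbil A Q r (x (k+1) - xs, lam (k+1) - ls)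
      (x k - x (k+1), lam k - lam (k+1)) := by
    intro k
    set xp := x (k+1) with hxp
    set lp := lam (k+1) with hlp
    set xc := x k with hxc
    set lk := lam k with hlk
    have e1 := key k xs hxsX
    have e2 := hVI (xp, lp) (hsub k).1
    simp only [Prod.mk_sub_mk, pdot, Jmap] at e2
    have hupd : lk - lp = r • (A *ᵥ ((2:ℝ) • xp - xc) - b) := by
      rw [hlp, hlam k, ← hxp, ← hxc, ← hlk]
      abel
    have eq1 : (lp - ls) ⬝ᵥ (A *ᵥ (xc - xp)) + 1/r * ((lp - ls) ⬝ᵥ (lk - lp))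
        = (lp - ls) ⬝ᵥ (A *ᵥ xp - b) := by
      rw [hupd, dotProduct_smul, smul_eq_mul,
        show 1/r * (r * ((lp - ls) ⬝ᵥ (A *ᵥ ((2:ℝ) • xp - xc) - b)))
          = (lp - ls) ⬝ᵥ (A *ᵥ ((2:ℝ) • xp - xc) - b) from by field_simp,
        ← dotProduct_add]
      congr 1
      rw [Matrix.mulVec_sub, Matrix.mulVec_sub, Matrix.mulVec_smul]
      module
    have eq3 : (xp - xs) ⬝ᵥ (Aᵀ *ᵥ (lk - lp))
        = (A *ᵥ (xp - xs)) ⬝ᵥ lk - (A *ᵥ (xp - xs)) ⬝ᵥ lp := by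
      rw [PALMaux.flip, dotProduct_sub]
    have eq4 : (xs - xp) ⬝ᵥ (P *ᵥ (xp - xc) - Aᵀ *ᵥ lk)
        = (xp - xs) ⬝ᵥ (P *ᵥ (xc - xp)) + (A *ᵥ (xp - xs)) ⬝ᵥ lk := by
      rw [dotProduct_sub, show xs - xp = -(xp - xs) from (neg_sub xp xs).symm,
        show xp - xc = -(xc - xp) from (neg_sub xc xp).symm,
        Matrix.mulVec_neg, dotProduct_neg, neg_dotProduct, neg_neg, neg_dotProduct,
        PALMaux.flip]
      ring
    have eq5 : (xp - xs) ⬝ᵥ (-(Aᵀ *ᵥ ls)) = -((A *ᵥ (xp - xs)) ⬝ᵥ ls) := by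
      rw [dotProduct_neg, PALMaux.flip]
    have eq6 : (lp - ls) ⬝ᵥ (A *ᵥ xp - b) - (lp - ls) ⬝ᵥ (A *ᵥ xs - b)
        = (A *ᵥ (xp - xs)) ⬝ᵥ lp - (A *ᵥ (xp - xs)) ⬝ᵥ ls := by
      rw [← dotProduct_sub,
        show A *ᵥ xp - b - (A *ᵥ xs - b) = A *ᵥ (xp - xs) from by
          rw [Matrix.mulVec_sub]; abel,
        dotProduct_comm, dotProduct_sub]
    simp only [Hbil, ← hPdef]
    rw [eq4] at e1
    rw [eq5] at e2
    linarith [e1, e2, eq1, eq3, eq6]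
  have fej : ∀ k : ℕ,
      HnormSq A Q r (x (k+1) - xs, lam (k+1) - ls)
        + HnormSq A Q r (x k - x (k+1), lam k - lam (k+1))
      ≤ HnormSq A Q r (x k - xs, lam k - ls) := by
    intro k
    have h1 := hexpand (x (k+1) - xs) (x k - x (k+1)) (lam (k+1) - ls) (lam k - lam (k+1))
    rw [show x (k+1) - xs + (x k - x (k+1)) = x k - xs from by abel,
      show lam (k+1) - ls + (lam k - lam (k+1)) = lam k - ls from by abel] at h1
    have h2 := hcross k
    linarith
  set C0 := HnormSq A Q r (x 0 - xs, lam 0 - ls) with hC0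
  have tele : ∀ k : ℕ,
      (∑ t ∈ range k, HnormSq A Q r (x t - x (t+1), lam t - lam (t+1)))
        + HnormSq A Q r (x k - xs, lam k - ls) ≤ C0 := by
    intro k
    induction k with
    | zero => simp [hC0]
    | succ k ih =>
      rw [Finset.sum_range_succ]
      have := fej k
      linarith
  obtain ⟨μ, hμ, hμle⟩ := PALMaux.posdef_lower Q hQ
  obtain ⟨cq, hcq0, hcq⟩ := PALMaux.opbound Q
  obtain ⟨ca, hca0, hca⟩ := PALMaux.opbound Aᵀ
  have hC0nn : 0 ≤ C0 := hHnn _ _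
  have hC0μ : 0 ≤ C0 / μ := by positivity
  refine ⟨C0/μ + 2*cq*(C0/μ) + 2*ca*(r*C0) + 1, by positivity, ?_⟩
  intro k hk
  have hkpos : (0:ℝ) < (k : ℝ) := by exact_mod_cast hk
  have hsum : ∑ t ∈ range k, HnormSq A Q r (x t - x (t+1), lam t - lam (t+1))
      ≤ ∑ _t ∈ range k, C0 / (k:ℝ) := by
    have h1 := tele k
    have h2 := hHnn (x k - xs) (lam k - ls)
    have h3 : ∑ _t ∈ range k, C0 / (k:ℝ) = C0 := by
      rw [Finset.sum_const, Finset.card_range, nsmul_eq_mul]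
      field_simp
    rw [h3]
    linarith
  obtain ⟨i, hik, hi⟩ := Finset.exists_le_of_sum_le ⟨0, Finset.mem_range.2 (by omega)⟩ hsum
  have hik' := Finset.mem_range.1 hik
  refine ⟨i + 1, by omega, by omega, ?_, ?_⟩
  · -- ‖x^{t-1} - x^t‖² bound
    simp only [Nat.add_sub_cancel]
    set dx := x i - x (i+1) with hdx
    set dl := lam i - lam (i+1) with hdl
    have hDi : HnormSq A Q r (dx, dl)
        = dx ⬝ᵥ (Q *ᵥ dx) + 1/r * ((r • (A *ᵥ dx) + dl) ⬝ᵥ (r • (A *ᵥ dx) + dl)) := hHns dx dl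
    have hvnn := PALMaux.dot_self_nonneg (r • (A *ᵥ dx) + dl)
    have hqd : dx ⬝ᵥ (Q *ᵥ dx) ≤ C0 / k := by
      rw [hDi] at hi
      have : (0:ℝ) ≤ 1/r * ((r • (A *ᵥ dx) + dl) ⬝ᵥ (r • (A *ᵥ dx) + dl)) := by positivity
      linarith
    have hq2 : μ * (dx ⬝ᵥ dx) ≤ C0 / k := le_trans (hμle dx) hqd
    have hq3 : μ * (dx ⬝ᵥ dx) * k ≤ C0 := (le_div_iff₀ hkpos).1 hq2
    have b1 : dx ⬝ᵥ dx ≤ C0 / μ / k := by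
      rw [div_div, le_div_iff₀ (mul_pos hμ hkpos),
        show dx ⬝ᵥ dx * (μ * k) = μ * (dx ⬝ᵥ dx) * k from by ring]
      exact hq3
    have hnum : C0 / μ ≤ C0/μ + 2*cq*(C0/μ) + 2*ca*(r*C0) + 1 := by
      have h4 : 0 ≤ 2*cq*(C0/μ) := by positivity
      have h5 : 0 ≤ 2*ca*(r*C0) := by positivity
      linarith
    calc dx ⬝ᵥ dx ≤ C0 / μ / k := b1
      _ ≤ (C0/μ + 2*cq*(C0/μ) + 2*ca*(r*C0) + 1) / k :=
        div_le_div_of_nonneg_right hnum hkpos.le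
  · -- ‖s^t‖² bound
    set dx := x i - x (i+1) with hdx
    set dl := lam i - lam (i+1) with hdl
    set v := r • (A *ᵥ dx) + dl with hv
    have hDi : HnormSq A Q r (dx, dl) = dx ⬝ᵥ (Q *ᵥ dx) + 1/r * (v ⬝ᵥ v) := hHns dx dl
    have hvnn := PALMaux.dot_self_nonneg v
    have hqd : dx ⬝ᵥ (Q *ᵥ dx) ≤ C0 / k := by
      rw [hDi] at hi
      have : (0:ℝ) ≤ 1/r * (v ⬝ᵥ v) := by positivity
      linarith
    have hq3 : μ * (dx ⬝ᵥ dx) * k ≤ C0 := (le_div_iff₀ hkpos).1 (le_trans (hμle dx) hqd)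
    have b1 : dx ⬝ᵥ dx ≤ C0 / μ / k := by
      rw [div_div, le_div_iff₀ (mul_pos hμ hkpos),
        show dx ⬝ᵥ dx * (μ * k) = μ * (dx ⬝ᵥ dx) * k from by ring]
      exact hq3
    have hvv : v ⬝ᵥ v ≤ r * (C0/k) := by
      have h1 : 1/r * (v ⬝ᵥ v) ≤ C0/k := by
        rw [hDi] at hi
        have := hQpsd dx
        linarith
      calc v ⬝ᵥ v = r * (1/r * (v ⬝ᵥ v)) := by field_simp
        _ ≤ r * (C0/k) := mul_le_mul_of_nonneg_left h1 hr.le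
    have hseq : s (i+1) = -(Q *ᵥ dx + Aᵀ *ᵥ v) := by
      rw [hs (i+1) (by omega)]
      simp only [Nat.add_sub_cancel]
      rw [show x (i+1) - x i = -dx from by rw [hdx]; abel,
        show lam (i+1) - lam i = -dl from by rw [hdl]; abel,
        Matrix.mulVec_neg, Matrix.mulVec_neg, hv]
      rw [Matrix.add_mulVec, Matrix.mulVec_add, Matrix.mulVec_smul, Matrix.smul_mulVec,
        ← Matrix.mulVec_mulVec]
      abel
    have hsdot : s (i+1) ⬝ᵥ s (i+1) = (Q *ᵥ dx + Aᵀ *ᵥ v) ⬝ᵥ (Q *ᵥ dx + Aᵀ *ᵥ v) := by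
      rw [hseq, neg_dotProduct, dotProduct_neg, neg_neg]
    have htwo := PALMaux.two_norm (Q *ᵥ dx) (Aᵀ *ᵥ v)
    have hb2 := hcq dx
    have hb3 := hca v
    have hfin : s (i+1) ⬝ᵥ s (i+1) ≤ 2*cq*(C0/μ/k) + 2*ca*(r*(C0/k)) := by
      rw [hsdot]
      have h6 : 2 * ((Q *ᵥ dx) ⬝ᵥ (Q *ᵥ dx)) ≤ 2*cq*(C0/μ/k) := by nlinarith
      have h7 : 2 * ((Aᵀ *ᵥ v) ⬝ᵥ (Aᵀ *ᵥ v)) ≤ 2*ca*(r*(C0/k)) := by nlinarith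
      linarith
    have heq : 2*cq*(C0/μ/k) + 2*ca*(r*(C0/k)) = (2*cq*(C0/μ) + 2*ca*(r*C0)) / k := by
      ring
    have hnum : 2*cq*(C0/μ) + 2*ca*(r*C0) ≤ C0/μ + 2*cq*(C0/μ) + 2*ca*(r*C0) + 1 := by
      linarith
    calc s (i+1) ⬝ᵥ s (i+1) ≤ (2*cq*(C0/μ) + 2*ca*(r*C0)) / k := by rw [← heq]; exact hfin
      _ ≤ (C0/μ + 2*cq*(C0/μ) + 2*ca*(r*C0) + 1) / k :=
        div_le_div_of_nonneg_right hnum hkpos.le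
end
end

section
/- Let p ≥ 1, A_i ∈ ℝ^{m×n_i}, r_i > 0, and Q_i ∈ ℝ^{n_i×n_i} symmetric positive definite for i = 1, …, p. Then the quadratic form on (x_1, …, x_p, λ) ∈ ℝ^{n_1} × ⋯ × ℝ^{n_p} × ℝᵐ given by ∑_{i=1}^p ⟨x_i, (r_i A_iᵀA_i + Q_i) x_i⟩ + 2 ∑_{i=1}^p ⟨λ, A_i x_i⟩ + (∑_{j=1}^p 1/r_j) ‖λ‖² equals ∑_{i=1}^p ‖√r_i · A_i x_i + (1/√r_i) · λ‖² + ∑_{i=1}^p ⟨x_i, Q_i x_i⟩, and is strictly positive whenever (x_1, …, x_p, λ) ≠ 0; that is, the block matrix H with (i,i) blocks r_i A_iᵀA_i + Q_i, (i, p+1) blocks A_iᵀ, (p+1, i) blocks A_i, and (p+1, p+1) block (∑_{j=1}^p 1/r_j) I_m is symmetric positive definite. -/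
open Matrix Finset

lemma aux_key {m : ℕ} (r : ℝ) (hr : 0 < r) (u lam : Fin m → ℝ) :
    (Real.sqrt r • u + (1 / Real.sqrt r) • lam) ⬝ᵥ
      (Real.sqrt r • u + (1 / Real.sqrt r) • lam)
    = r * (u ⬝ᵥ u) + 2 * (lam ⬝ᵥ u) + (1 / r) * (lam ⬝ᵥ lam) := by
  have hs : Real.sqrt r * Real.sqrt r = r := Real.mul_self_sqrt hr.le
  have hsne : Real.sqrt r ≠ 0 := ne_of_gt (Real.sqrt_pos.2 hr)
  simp only [dotProduct_add, add_dotProduct, dotProduct_smul, smul_dotProduct,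
    smul_eq_mul]
  rw [dotProduct_comm u lam]
  field_simp
  ring_nf
  rw [Real.sq_sqrt hr.le]
  have h4 : Real.sqrt r ^ 4 = r ^ 2 := by
    rw [show (4:ℕ) = 2 * 2 from rfl, pow_mul, Real.sq_sqrt hr.le]
  linear_combination (r * (u ⬝ᵥ u)) * h4

lemma aux_diag {n m : ℕ} (r : ℝ) (A : Matrix (Fin m) (Fin n) ℝ)
    (Q : Matrix (Fin n) (Fin n) ℝ) (x : Fin n → ℝ) :
    x ⬝ᵥ ((r • (Aᵀ * A) + Q) *ᵥ x)
      = r * ((A *ᵥ x) ⬝ᵥ (A *ᵥ x)) + x ⬝ᵥ (Q *ᵥ x) := by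
  rw [add_mulVec, dotProduct_add, smul_mulVec, dotProduct_smul, smul_eq_mul,
    ← mulVec_mulVec, dotProduct_mulVec x Aᵀ, vecMul_transpose]

/-- The quadratic form of the multi-block matrix `H` (with diagonal blocks
`rᵢAᵢᵀAᵢ + Qᵢ`, off-diagonal blocks `Aᵢᵀ`/`Aᵢ` and lower-right block `(∑ⱼ 1/rⱼ)I_m`) equals
`∑ᵢ ‖√rᵢ·Aᵢxᵢ + (1/√rᵢ)·λ‖² + ∑ᵢ ⟨xᵢ, Qᵢxᵢ⟩`, and is strictly positive off the origin, i.e.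
`H` is symmetric positive definite. -/
theorem stmt_14 (p m : ℕ) (hp : 1 ≤ p) (nd : Fin p → ℕ)
    (A : ∀ i : Fin p, Matrix (Fin m) (Fin (nd i)) ℝ)
    (r : Fin p → ℝ) (hr : ∀ i, 0 < r i)
    (Q : ∀ i : Fin p, Matrix (Fin (nd i)) (Fin (nd i)) ℝ) (hQ : ∀ i, (Q i).PosDef) :
    (∀ (x : ∀ i : Fin p, Fin (nd i) → ℝ) (lam : Fin m → ℝ),
        (∑ i, x i ⬝ᵥ ((r i • ((A i)ᵀ * A i) + Q i) *ᵥ x i))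
            + 2 * (∑ i, lam ⬝ᵥ (A i *ᵥ x i)) + (∑ j, 1 / r j) * (lam ⬝ᵥ lam) =
          (∑ i, (Real.sqrt (r i) • (A i *ᵥ x i) + (1 / Real.sqrt (r i)) • lam) ⬝ᵥ
              (Real.sqrt (r i) • (A i *ᵥ x i) + (1 / Real.sqrt (r i)) • lam))
            + ∑ i, x i ⬝ᵥ (Q i *ᵥ x i)) ∧
      (∀ (x : ∀ i : Fin p, Fin (nd i) → ℝ) (lam : Fin m → ℝ), (x, lam) ≠ 0 →
        0 < (∑ i, x i ⬝ᵥ ((r i • ((A i)ᵀ * A i) + Q i) *ᵥ x i))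
            + 2 * (∑ i, lam ⬝ᵥ (A i *ᵥ x i)) + (∑ j, 1 / r j) * (lam ⬝ᵥ lam)) := by
  have key : ∀ (x : ∀ i : Fin p, Fin (nd i) → ℝ) (lam : Fin m → ℝ),
      (∑ i, x i ⬝ᵥ ((r i • ((A i)ᵀ * A i) + Q i) *ᵥ x i))
          + 2 * (∑ i, lam ⬝ᵥ (A i *ᵥ x i)) + (∑ j, 1 / r j) * (lam ⬝ᵥ lam) =
        (∑ i, (Real.sqrt (r i) • (A i *ᵥ x i) + (1 / Real.sqrt (r i)) • lam) ⬝ᵥ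
            (Real.sqrt (r i) • (A i *ᵥ x i) + (1 / Real.sqrt (r i)) • lam))
          + ∑ i, x i ⬝ᵥ (Q i *ᵥ x i) := by
    intro x lam
    have h1 : ∀ i : Fin p,
        (Real.sqrt (r i) • (A i *ᵥ x i) + (1 / Real.sqrt (r i)) • lam) ⬝ᵥ
            (Real.sqrt (r i) • (A i *ᵥ x i) + (1 / Real.sqrt (r i)) • lam)
          = r i * ((A i *ᵥ x i) ⬝ᵥ (A i *ᵥ x i)) + 2 * (lam ⬝ᵥ (A i *ᵥ x i))
            + (1 / r i) * (lam ⬝ᵥ lam) := fun i => aux_key (r i) (hr i) _ lam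
    simp only [aux_diag, h1, Finset.sum_add_distrib, Finset.sum_mul, Finset.mul_sum]
    ring
  refine ⟨key, fun x lam hne => ?_⟩
  rw [key]
  have hnn : ∀ i ∈ Finset.univ, (0:ℝ) ≤
      (Real.sqrt (r i) • (A i *ᵥ x i) + (1 / Real.sqrt (r i)) • lam) ⬝ᵥ
        (Real.sqrt (r i) • (A i *ᵥ x i) + (1 / Real.sqrt (r i)) • lam) :=
    fun i _ => Finset.sum_nonneg fun j _ => mul_self_nonneg _
  have hQnn : ∀ i ∈ Finset.univ, (0:ℝ) ≤ x i ⬝ᵥ (Q i *ᵥ x i) := by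
    intro i _
    rcases eq_or_ne (x i) 0 with h | h
    · simp [h]
    · exact le_of_lt (by simpa using (hQ i).dotProduct_mulVec_pos h)
  rcases eq_or_ne x 0 with hx | hx
  · have hlam : lam ≠ 0 := by
      intro h; exact hne (by simp [Prod.ext_iff, hx, h])
    have hi : (0:ℝ) < ∑ i, (Real.sqrt (r i) • (A i *ᵥ x i) + (1 / Real.sqrt (r i)) • lam) ⬝ᵥ
        (Real.sqrt (r i) • (A i *ᵥ x i) + (1 / Real.sqrt (r i)) • lam) := by
      have i0 : Fin p := ⟨0, hp⟩
      refine Finset.sum_pos' hnn ⟨i0, Finset.mem_univ _, ?_⟩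
      rw [aux_key (r i0) (hr i0) _ lam]
      have hx0 : x i0 = 0 := by rw [hx]; rfl
      have hll : (0:ℝ) < lam ⬝ᵥ lam := by
        rcases Function.ne_iff.1 hlam with ⟨j, hj⟩
        exact Finset.sum_pos' (fun k _ => mul_self_nonneg _)
          ⟨j, Finset.mem_univ _, mul_self_pos.2 hj⟩
      simp only [hx0, mulVec_zero, dotProduct_zero, zero_dotProduct, mul_zero, zero_add]
      exact mul_pos (one_div_pos.2 (hr i0)) hll
    have := Finset.sum_nonneg hQnn
    linarith
  · have hi : (0:ℝ) < ∑ i, x i ⬝ᵥ (Q i *ᵥ x i) := by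
      rcases Function.ne_iff.1 hx with ⟨j, hj⟩
      exact Finset.sum_pos' hQnn ⟨j, Finset.mem_univ _, by simpa using (hQ j).dotProduct_mulVec_pos hj⟩
    have := Finset.sum_nonneg hnn
    linarith
end
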